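/- arXiv:0911.1019 — 5 statements merged into one kernel-verified Lean document; each statement's English description precedes it below -/
import Mathlib

section
/- Let M > 0 and c < d be real numbers, and let a ∈ L¹(c,d) satisfy a(x) ≥ M for a.e. x ∈ (c,d). Suppose u : [c,d] → ℝ is a nontrivial solution of u''(x) + a(x)u(x) = 0 on (c,d) with u > 0 on (c,d) and either (u(c) = 0 and u'(d) = 0) or (u'(c) = 0 and u(d) = 0). Then d − c ≤ π/(2√M). If moreover a(x) > M on a subset of (c,d) of positive measure, then d − c < π/(2√M). -/
set_option maxHeartbeats 1000000

open MeasureTheory Set Real intervalIntegral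

lemma parts_aux (p q : ℝ) (g φ : ℝ → ℝ)
    (hg : IntegrableOn g (Set.Ioc p q)) (hφ : Continuous φ) :
    ∫ x in Set.Ioc p q, (∫ t in Set.Ioc p x, g t) * φ x
      = ∫ t in Set.Ioc p q, g t * (∫ x in Set.Ioc t q, φ x) := by
  set μ := volume.restrict (Set.Ioc p q) with hμ
  set S : Set (ℝ × ℝ) := {z : ℝ × ℝ | z.2 ≤ z.1} with hS
  have hSm : MeasurableSet S := measurableSet_le measurable_snd measurable_fst
  set F : ℝ × ℝ → ℝ := S.indicator (fun z => g z.2 * φ z.1) with hF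
  have hint : Integrable F (μ.prod μ) := by
    apply Integrable.indicator _ hSm
    have h1 : Integrable φ μ := hφ.integrableOn_Ioc
    exact (h1.mul_prod hg).congr (Filter.Eventually.of_forall fun z => mul_comm _ _)
  have swap : ∫ x, ∫ t, F (x, t) ∂μ ∂μ = ∫ t, ∫ x, F (x, t) ∂μ ∂μ :=
    integral_integral_swap (f := fun x t => F (x, t)) hint
  have hL : ∫ x, ∫ t, F (x, t) ∂μ ∂μ
      = ∫ x in Set.Ioc p q, (∫ t in Set.Ioc p x, g t) * φ x := by
    apply setIntegral_congr_fun measurableSet_Ioc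
    intro x hx
    dsimp only
    have : (fun t => F (x, t)) = (Set.Iic x).indicator (fun t => g t * φ x) := by
      funext t
      by_cases h : t ≤ x <;> simp [F, S, Set.indicator, h]
    rw [this, setIntegral_indicator measurableSet_Iic, Set.Ioc_inter_Iic,
      min_eq_right hx.2, MeasureTheory.integral_mul_const]
  have hR : ∫ t, ∫ x, F (x, t) ∂μ ∂μ
      = ∫ t in Set.Ioc p q, g t * (∫ x in Set.Ioc t q, φ x) := by
    apply setIntegral_congr_fun measurableSet_Ioc
    intro t ht
    dsimp only
    have h1 : (fun x => F (x, t)) = (Set.Ici t).indicator (fun x => g t * φ x) := by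
      funext x
      by_cases h : t ≤ x <;> simp [F, S, Set.indicator, h]
    have h2 : Set.Ioc p q ∩ Set.Ici t = Set.Icc t q := by
      ext x
      constructor
      · rintro ⟨⟨_, h2⟩, h3⟩; exact ⟨h3, h2⟩
      · rintro ⟨h1', h2'⟩; exact ⟨⟨lt_of_lt_of_le ht.1 h1', h2'⟩, h1'⟩
    rw [h1, setIntegral_indicator measurableSet_Ici, h2, integral_Icc_eq_integral_Ioc,
      MeasureTheory.integral_const_mul]
  rw [← hL, ← hR, swap]

lemma key_identity (M c d p q : ℝ) (a u v w w' : ℝ → ℝ)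
    (hc : c ≤ p) (hpq : p < q) (hqd : q ≤ d)
    (ha : IntegrableOn a (Set.Icc c d))
    (hu : ∀ x ∈ Set.Icc c d, HasDerivWithinAt u (v x) (Set.Icc c d) x)
    (hv : ∀ x ∈ Set.Icc c d, v x = v c - ∫ t in c..x, a t * u t)
    (hw : ∀ x, HasDerivAt w (w' x) x)
    (hw' : ∀ x, HasDerivAt w' (-(M * w x)) x) :
    u q * w' q - v q * w q - (u p * w' p - v p * w p)
      = ∫ x in Set.Ioc p q, (a x - M) * u x * w x := by
  have hcd : c ≤ d := hc.trans (hpq.le.trans hqd)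
  have hpI : p ∈ Set.Icc c d := ⟨hc, hpq.le.trans hqd⟩
  have hqI : q ∈ Set.Icc c d := ⟨hc.trans hpq.le, hqd⟩
  have hIpq : Set.Icc p q ⊆ Set.Icc c d := Set.Icc_subset_Icc hc hqd
  have hIopq : Set.Ioc p q ⊆ Set.Icc c d := Set.Ioc_subset_Icc_self.trans hIpq
  -- continuity of u, w, w'
  have ucont : ContinuousOn u (Set.Icc c d) := fun x hx => (hu x hx).continuousWithinAt
  have wcont : Continuous w := by
    rw [continuous_iff_continuousAt]; exact fun x => (hw x).continuousAt
  have w'cont : Continuous w' := by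
    rw [continuous_iff_continuousAt]; exact fun x => (hw' x).continuousAt
  set g : ℝ → ℝ := fun t => a t * u t with hgdef
  have hg : IntegrableOn g (Set.Icc c d) := ha.mul_continuousOn ucont isCompact_Icc
  have hgpq : IntegrableOn g (Set.Ioc p q) := hg.mono_set hIopq
  have hsub : ∀ x1 ∈ Set.Icc c d, ∀ x2 ∈ Set.Icc c d, IntervalIntegrable g volume x1 x2 := by
    intro x1 h1 x2 h2
    exact (hg.mono_set (Set.uIcc_subset_Icc h1 h2)).intervalIntegrable
  -- v in terms of primitive from p
  have vform : ∀ x ∈ Set.Icc c d, v x = v p - ∫ t in p..x, g t := by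
    intro x hx
    have h1 := hv x hx
    have h2 := hv p hpI
    have h3 : (∫ t in c..p, g t) + ∫ t in p..x, g t = ∫ t in c..x, g t :=
      integral_add_adjacent_intervals (hsub c ⟨le_refl c, hcd⟩ p hpI) (hsub p hpI x hx)
    rw [h1, h2, ← h3]; ring
  -- continuity of v
  have vcont : ContinuousOn v (Set.Icc c d) := by
    have : ContinuousOn (fun x => v c - ∫ t in c..x, g t) (Set.Icc c d) := by
      apply continuousOn_const.sub
      have hguIcc : IntegrableOn g (Set.uIcc c d) := by rwa [Set.uIcc_of_le hcd]
      have := continuousOn_primitive_interval (f := g) hguIcc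
      rwa [Set.uIcc_of_le hcd] at this
    exact this.congr hv
  -- FTC for u * w'
  have hA : u q * w' q - u p * w' p
      = ∫ x in p..q, (v x * w' x - M * (u x * w x)) := by
    have hcont : ContinuousOn (fun x => u x * w' x) (Set.Icc p q) :=
      (ucont.mono hIpq).mul w'cont.continuousOn
    have hderiv : ∀ x ∈ Set.Ioo p q,
        HasDerivWithinAt (fun x => u x * w' x)
          (v x * w' x - M * (u x * w x)) (Set.Ioi x) x := by
      intro x hx
      have hxI : x ∈ Set.Ioo c d := ⟨hc.trans_lt hx.1, hx.2.trans_le hqd⟩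
      have hux : HasDerivAt u (v x) x :=
        (hu x (Set.Ioo_subset_Icc_self hxI)).hasDerivAt
          (Icc_mem_nhds hxI.1 hxI.2)
      have := hux.mul (hw' x)
      have h2 : v x * w' x + u x * -(M * w x) = v x * w' x - M * (u x * w x) := by ring
      rw [h2] at this
      exact this.hasDerivWithinAt
    have hint : IntervalIntegrable (fun x => v x * w' x - M * (u x * w x)) volume p q := by
      apply ContinuousOn.intervalIntegrable
      rw [Set.uIcc_of_le hpq.le]
      exact ((vcont.mono hIpq).mul w'cont.continuousOn).sub
        (continuousOn_const.mul ((ucont.mono hIpq).mul wcont.continuousOn))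
    exact (integral_eq_sub_of_hasDeriv_right_of_le hpq.le hcont hderiv hint).symm
  -- the primitive G
  set G : ℝ → ℝ := fun x => ∫ t in Set.Ioc p x, g t with hGdef
  have hGint : ∀ x ∈ Set.Icc p q, G x = ∫ t in p..x, g t := by
    intro x hx
    rw [integral_of_le hx.1]
  have hGcont : ContinuousOn G (Set.Icc p q) :=
    continuousOn_primitive (hg.mono_set hIpq)
  -- Fubini / integration by parts
  have hB : ∫ x in Set.Ioc p q, G x * w' x
      = (∫ t in Set.Ioc p q, g t) * w q - ∫ t in Set.Ioc p q, g t * w t := by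
    rw [parts_aux p q g w' hgpq w'cont]
    have h1 : ∀ t ∈ Set.Ioc p q, g t * (∫ x in Set.Ioc t q, w' x)
        = g t * w q - g t * w t := by
      intro t ht
      have : ∫ x in Set.Ioc t q, w' x = w q - w t := by
        rw [← integral_of_le ht.2]
        exact integral_eq_sub_of_hasDerivAt (fun x _ => hw x)
          (w'cont.intervalIntegrable t q)
      rw [this]; ring
    rw [setIntegral_congr_fun measurableSet_Ioc h1]
    have hgw : IntegrableOn (fun t => g t * w t) (Set.Ioc p q) :=
      (hg.mul_continuousOn wcont.continuousOn isCompact_Icc).mono_set hIopq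
    have hgwq : IntegrableOn (fun t => g t * w q) (Set.Ioc p q) := hgpq.mul_const _
    rw [integral_sub hgwq hgw, MeasureTheory.integral_mul_const]
  -- rewrite interval integrals as set integrals and split
  have huwint : IntegrableOn (fun x => u x * w x) (Set.Ioc p q) :=
    (((ucont.mono hIpq).mul wcont.continuousOn).integrableOn_compact isCompact_Icc).mono_set
      Set.Ioc_subset_Icc_self
  have hvw'int : IntegrableOn (fun x => v x * w' x) (Set.Ioc p q) :=
    (((vcont.mono hIpq).mul w'cont.continuousOn).integrableOn_compact isCompact_Icc).mono_set
      Set.Ioc_subset_Icc_self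
  have hA' : u q * w' q - u p * w' p
      = (∫ x in Set.Ioc p q, v x * w' x) - M * ∫ x in Set.Ioc p q, u x * w x := by
    rw [hA, integral_of_le hpq.le, integral_sub hvw'int (huwint.const_mul M),
      MeasureTheory.integral_const_mul]
  -- compute ∫ v w'
  have hGw'int : IntegrableOn (fun x => G x * w' x) (Set.Ioc p q) :=
    ((hGcont.mul w'cont.continuousOn).integrableOn_compact isCompact_Icc).mono_set
      Set.Ioc_subset_Icc_self
  have hvw' : ∫ x in Set.Ioc p q, v x * w' x
      = v p * (w q - w p) - ∫ x in Set.Ioc p q, G x * w' x := by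
    have h1 : ∀ x ∈ Set.Ioc p q, v x * w' x = v p * w' x - G x * w' x := by
      intro x hx
      rw [vform x (hIopq hx), hGint x (Set.Ioc_subset_Icc_self hx)]; ring
    rw [setIntegral_congr_fun measurableSet_Ioc h1,
      integral_sub ((w'cont.integrableOn_Ioc).const_mul (v p)) hGw'int,
      MeasureTheory.integral_const_mul, ← integral_of_le hpq.le,
      integral_eq_sub_of_hasDerivAt (fun x _ => hw x) (w'cont.intervalIntegrable p q)]
  -- value of v q
  have hvq : v q = v p - ∫ t in Set.Ioc p q, g t := by
    rw [vform q hqI, integral_of_le hpq.le]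
  -- RHS split
  have hRHS : ∫ x in Set.Ioc p q, (a x - M) * u x * w x
      = (∫ t in Set.Ioc p q, g t * w t) - M * ∫ x in Set.Ioc p q, u x * w x := by
    have h1 : ∀ x ∈ Set.Ioc p q, (a x - M) * u x * w x
        = g x * w x - M * (u x * w x) := by
      intro x _; simp only [hgdef]; ring
    have hgw : IntegrableOn (fun t => g t * w t) (Set.Ioc p q) :=
      (hg.mul_continuousOn wcont.continuousOn isCompact_Icc).mono_set hIopq
    rw [setIntegral_congr_fun measurableSet_Ioc h1,
      integral_sub hgw (huwint.const_mul M), MeasureTheory.integral_const_mul]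
  rw [hRHS]
  have e1 := hA'
  rw [hvw'] at e1
  rw [hvq]
  rw [hB] at e1
  linarith [e1]

/-- `u` is a solution of `u'' + a·u = 0` on `[c,d]`, with derivative function `v`:
`u` is continuously differentiable with derivative `v`, and `v` satisfies the
integral equation `v x = v c - ∫_c^x a·u` (so `v` is absolutely continuous and
`u'' = -a·u` a.e.). -/
def IsSolOn (a u v : ℝ → ℝ) (c d : ℝ) : Prop :=
  (∀ x ∈ Set.Icc c d, HasDerivWithinAt u (v x) (Set.Icc c d) x) ∧
  (∀ x ∈ Set.Icc c d, v x = v c - ∫ t in c..x, a t * u t)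

theorem stmt0 (M c d : ℝ) (hM : 0 < M) (hcd : c < d)
    (a u v : ℝ → ℝ)
    (ha : IntegrableOn a (Set.Ioo c d))
    (haM : ∀ᵐ x ∂(volume.restrict (Set.Ioo c d)), M ≤ a x)
    (hsol : IsSolOn a u v c d)
    (hnt : ∃ x ∈ Set.Icc c d, u x ≠ 0)
    (hpos : ∀ x ∈ Set.Ioo c d, 0 < u x)
    (hbc : (u c = 0 ∧ v d = 0) ∨ (v c = 0 ∧ u d = 0)) :
    d - c ≤ Real.pi / (2 * Real.sqrt M) ∧
      (0 < volume {x ∈ Set.Ioo c d | M < a x} →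
        d - c < Real.pi / (2 * Real.sqrt M)) := by
  obtain ⟨hu, hv⟩ := hsol
  obtain ⟨s, hsdef⟩ : ∃ s, s = Real.sqrt M := ⟨_, rfl⟩
  have hs : 0 < s := by rw [hsdef]; exact Real.sqrt_pos.2 hM
  have hs2 : s * s = M := by rw [hsdef]; exact Real.mul_self_sqrt hM.le
  obtain ⟨L, hLdef⟩ : ∃ L, L = Real.pi / (2 * s) := ⟨_, rfl⟩
  have hL : 0 < L := by rw [hLdef]; positivity
  have hgoal : Real.pi / (2 * Real.sqrt M) = L := by rw [hLdef, hsdef]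
  rw [hgoal]
  have hsL : s * L = Real.pi / 2 := by
    rw [hLdef]; field_simp
  have haI : IntegrableOn a (Set.Icc c d) := by
    rwa [integrableOn_Icc_iff_integrableOn_Ioo]
  have ucont : ContinuousOn u (Set.Icc c d) := fun x hx => (hu x hx).continuousWithinAt
  -- trig solutions
  have hsin : ∀ e x, HasDerivAt (fun x => Real.sin (s * (x - e)))
      (s * Real.cos (s * (x - e))) x := by
    intro e x
    have h1 : HasDerivAt (fun x : ℝ => s * (x - e)) s x := by
      simpa using ((hasDerivAt_id x).sub_const e).const_mul s
    exact ((Real.hasDerivAt_sin (s * (x - e))).comp x h1).congr_deriv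
      (by ring : Real.cos (s * (x - e)) * s = s * Real.cos (s * (x - e)))
  have hcos : ∀ e x, HasDerivAt (fun x => Real.cos (s * (x - e)))
      (-(s * Real.sin (s * (x - e)))) x := by
    intro e x
    have h1 : HasDerivAt (fun x : ℝ => s * (x - e)) s x := by
      simpa using ((hasDerivAt_id x).sub_const e).const_mul s
    have := (Real.hasDerivAt_cos (s * (x - e))).comp x h1
    exact this.congr_deriv (by ring)
  have hsin' : ∀ e x, HasDerivAt (fun x => s * Real.cos (s * (x - e)))
      (-(M * Real.sin (s * (x - e)))) x := by
    intro e x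
    have := (hcos e x).const_mul s
    exact this.congr_deriv (by rw [← hs2]; ring)
  have hcos' : ∀ e x, HasDerivAt (fun x => -(s * Real.sin (s * (x - e))))
      (-(M * Real.cos (s * (x - e)))) x := by
    intro e x
    have := ((hsin e x).const_mul s).neg
    exact this.congr_deriv (by rw [← hs2]; ring)
  -- generic nonnegativity of the integral
  have hnonneg : ∀ (p q : ℝ) (w : ℝ → ℝ), c ≤ p → q ≤ d →
      (∀ x ∈ Set.Ioo p q, 0 ≤ w x) →
      0 ≤ ∫ x in Set.Ioc p q, (a x - M) * u x * w x := by
    intro p q w hp hq hw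
    rw [integral_Ioc_eq_integral_Ioo]
    apply setIntegral_nonneg_of_ae_restrict
    have h1 : ∀ᵐ x ∂(volume.restrict (Set.Ioo p q)), M ≤ a x :=
      ae_restrict_of_ae_restrict_of_subset (Set.Ioo_subset_Ioo hp hq) haM
    have h2 : ∀ᵐ x ∂(volume.restrict (Set.Ioo p q)), x ∈ Set.Ioo p q :=
      ae_restrict_mem measurableSet_Ioo
    filter_upwards [h1, h2] with x hax hx
    have hux := hpos x (Set.Ioo_subset_Ioo hp hq hx)
    have := hw x hx
    have : 0 ≤ (a x - M) := by linarith
    positivity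
  -- Part 1 : d - c ≤ L
  have part1 : d - c ≤ L := by
    by_contra h
    push_neg at h
    rcases hbc with ⟨huc, hvd⟩ | ⟨hvc, hud⟩
    · -- u c = 0, v d = 0 ; compare on [d - L, d] with sin (s (x - e))
      obtain ⟨e, hedef⟩ : ∃ e, e = d - L := ⟨_, rfl⟩
      have hce : c < e := by rw [hedef]; linarith
      have hed : e < d := by rw [hedef]; linarith

      have hkey := key_identity M c d e d a u v
        (fun x => Real.sin (s * (x - e))) (fun x => s * Real.cos (s * (x - e)))
        hce.le hed le_rfl haI hu hv (hsin e) (hsin' e)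
      have hwe : Real.sin (s * (e - e)) = 0 := by simp
      have hw'e : s * Real.cos (s * (e - e)) = s := by simp
      have hw'd : s * Real.cos (s * (d - e)) = 0 := by
        have : d - e = L := by rw [hedef]; ring
        rw [this, hsL, Real.cos_pi_div_two, mul_zero]
      have hge := hnonneg e d _ hce.le le_rfl (fun x hx => by
        have h1 : 0 < s * (x - e) := by
          have := hx.1; nlinarith
        have h2 : s * (x - e) < Real.pi := by
          have hxd := hx.2
          have h3 : s * (x - e) < s * L := by
            have h4 : x - e < L := by
              have h5 := hx.2
              rw [hedef]
              linarith
            nlinarith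
          rw [hsL] at h3
          have h6 : (0:ℝ) < Real.pi := Real.pi_pos
          linarith
        exact (Real.sin_pos_of_pos_of_lt_pi h1 h2).le)
      rw [← hkey] at hge
      simp only [hvd, hwe, hw'e, hw'd] at hge
      have hue : 0 < u e := hpos e ⟨hce, hed⟩
      nlinarith
    · -- v c = 0, u d = 0 ; compare on [c, c + L] with cos (s (x - c))
      obtain ⟨q', hqdef⟩ : ∃ q', q' = c + L := ⟨_, rfl⟩
      have hcq : c < q' := by rw [hqdef]; linarith
      have hqd : q' < d := by rw [hqdef]; linarith
      have hkey := key_identity M c d c q' a u v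
        (fun x => Real.cos (s * (x - c))) (fun x => -(s * Real.sin (s * (x - c))))
        le_rfl hcq hqd.le haI hu hv (hcos c) (hcos' c)
      have hwc : Real.cos (s * (c - c)) = 1 := by simp
      have hw'c : -(s * Real.sin (s * (c - c))) = 0 := by simp
      have hwq : Real.cos (s * (q' - c)) = 0 := by
        have : q' - c = L := by rw [hqdef]; ring
        rw [this, hsL, Real.cos_pi_div_two]
      have hw'q : -(s * Real.sin (s * (q' - c))) = -s := by
        have : q' - c = L := by rw [hqdef]; ring
        rw [this, hsL, Real.sin_pi_div_two, mul_one]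
      have hge := hnonneg c q' _ le_rfl hqd.le (fun x hx => by
        have h1 : 0 < s * (x - c) := by
          have := hx.1; nlinarith
        have h2 : s * (x - c) < Real.pi / 2 := by
          have : s * (x - c) < s * L := by
            have : x - c < L := by rw [hqdef] at hx; linarith [hx.2]
            nlinarith
          rwa [hsL] at this
        exact (Real.cos_pos_of_mem_Ioo ⟨by linarith [Real.pi_pos], h2⟩).le)
      rw [← hkey] at hge
      simp only [hvc, hwc, hw'c, hwq, hw'q] at hge
      have huq : 0 < u q' := hpos q' ⟨hcq, hqd⟩
      nlinarith
  refine ⟨part1, ?_⟩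
  -- Part 2 : strict inequality
  intro hP
  by_contra h
  push_neg at h
  have heq : d - c = L := le_antisymm part1 h
  have hdc : d = c + L := by linarith
  -- strict positivity of the integral for positive w
  have hstrict : ∀ w : ℝ → ℝ, Continuous w → (∀ x ∈ Set.Ioo c d, 0 < w x) →
      0 < ∫ x in Set.Ioc c d, (a x - M) * u x * w x := by
    intro w hwcont hwpos
    rw [integral_Ioc_eq_integral_Ioo]
    have hae : 0 ≤ᵐ[volume.restrict (Set.Ioo c d)]
        fun x => (a x - M) * u x * w x := by
      filter_upwards [haM, ae_restrict_mem measurableSet_Ioo] with x hax hx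
      have := hpos x hx
      have := (hwpos x hx).le
      have : 0 ≤ a x - M := by linarith
      positivity
    have hint : IntegrableOn (fun x => (a x - M) * u x * w x) (Set.Ioo c d) := by
      have h1 : IntegrableOn (fun x => a x - M) (Set.Icc c d) :=
        haI.sub (integrableOn_const measure_Icc_lt_top.ne)
      have h2 : IntegrableOn (fun x => (a x - M) * (u x * w x)) (Set.Icc c d) :=
        h1.mul_continuousOn (ucont.mul hwcont.continuousOn) isCompact_Icc
      exact (h2.congr_fun (fun x _ => by ring) measurableSet_Icc).mono_set
        Set.Ioo_subset_Icc_self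
    rw [setIntegral_pos_iff_support_of_nonneg_ae hae hint]
    refine lt_of_lt_of_le hP (measure_mono ?_)
    rintro x ⟨hx, hax⟩
    refine ⟨?_, hx⟩
    have h1 := hpos x hx
    have h2 := hwpos x hx
    have h3 : 0 < a x - M := by linarith
    exact ne_of_gt (by positivity)
  rcases hbc with ⟨huc, hvd⟩ | ⟨hvc, hud⟩
  · -- u c = 0, v d = 0 ; w = sin (s (x - c)) on [c, d]
    have hkey := key_identity M c d c d a u v
      (fun x => Real.sin (s * (x - c))) (fun x => s * Real.cos (s * (x - c)))
      le_rfl hcd le_rfl haI hu hv (hsin c) (hsin' c)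
    beta_reduce at hkey
    have hwc : Real.sin (s * (c - c)) = 0 := by simp
    have hw'c : s * Real.cos (s * (c - c)) = s := by simp
    have hw'd : s * Real.cos (s * (d - c)) = 0 := by
      rw [heq, hsL, Real.cos_pi_div_two, mul_zero]
    have hgt := hstrict (fun x => Real.sin (s * (x - c))) (Real.continuous_sin.comp
        (continuous_const.mul (continuous_id.sub continuous_const)))
      (fun x hx => by
        have h1 : 0 < s * (x - c) := by
          have := hx.1; nlinarith
        have h2 : s * (x - c) < Real.pi := by
          have h3 : s * (x - c) < s * L := by
            have h4 : x - c < L := by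
              have := hx.2
              rw [hdc] at this
              linarith
            nlinarith
          rw [hsL] at h3
          have h6 : (0:ℝ) < Real.pi := Real.pi_pos
          linarith
        exact Real.sin_pos_of_pos_of_lt_pi h1 h2)
    beta_reduce at hgt
    rw [← hkey] at hgt
    simp only [hvd, hwc, hw'c, hw'd, huc] at hgt
    nlinarith
  · -- v c = 0, u d = 0 ; w = cos (s (x - c)) on [c, d]
    have hkey := key_identity M c d c d a u v
      (fun x => Real.cos (s * (x - c))) (fun x => -(s * Real.sin (s * (x - c))))
      le_rfl hcd le_rfl haI hu hv (hcos c) (hcos' c)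
    beta_reduce at hkey
    have hwc : Real.cos (s * (c - c)) = 1 := by simp
    have hw'c : -(s * Real.sin (s * (c - c))) = 0 := by simp
    have hwd : Real.cos (s * (d - c)) = 0 := by
      rw [heq, hsL, Real.cos_pi_div_two]
    have hgt := hstrict (fun x => Real.cos (s * (x - c))) (Real.continuous_cos.comp
        (continuous_const.mul (continuous_id.sub continuous_const)))
      (fun x hx => by
        have h1 : 0 < s * (x - c) := by
          have := hx.1; nlinarith
        have h2 : s * (x - c) < Real.pi / 2 := by
          have : s * (x - c) < s * L := by
            have : x - c < L := by rw [hdc] at hx; linarith [hx.2]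
            nlinarith
          rwa [hsL] at this
        exact Real.cos_pos_of_mem_Ioo ⟨by linarith [Real.pi_pos], h2⟩)
    beta_reduce at hgt
    rw [← hkey] at hgt
    simp only [hvc, hwc, hw'c, hwd, hud] at hgt
    nlinarith
end

section
/- Let c < d be real numbers, M > 0 with √M·(d − c) ≤ π/2, and a ∈ L¹(c,d). Suppose u : [c,d] → ℝ is a nontrivial solution of u''(x) + a(x)u(x) = 0 on (c,d) with u(c) = 0, u'(d) = 0, and u(x) ≠ 0 and u'(x) ≠ 0 for all x ∈ (c,d). Then ∫_c^d |a(x) − M| dx ≥ √M · cot(√M·(d − c)). -/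
open MeasureTheory Set Real

/-- Fubini core: ∫ g·(φ(d)−φ) = ∫ (∫g)·φ'. -/
lemma ibp_core (c d : ℝ) (hcd : c ≤ d) (g φ φ' : ℝ → ℝ)
    (hg : IntegrableOn g (Set.Ioc c d))
    (hφ : ∀ x, HasDerivAt φ (φ' x) x) (hφc : Continuous φ') :
    ∫ x in c..d, g x * (φ d - φ x) = ∫ t in c..d, (∫ x in c..t, g x) * φ' t := by
  set G : ℝ → ℝ := (Set.Ioc c d).indicator g with hGdef
  set Φ : ℝ → ℝ := (Set.Ioc c d).indicator φ' with hΦdef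
  have hGi : Integrable G := (integrable_indicator_iff measurableSet_Ioc).2 hg
  have hΦi : Integrable Φ := (integrable_indicator_iff measurableSet_Ioc).2
    hφc.integrableOn_Ioc
  set F : ℝ × ℝ → ℝ := fun p => if p.1 ≤ p.2 then G p.1 * Φ p.2 else 0 with hFdef
  have hFi : Integrable F (volume.prod volume) := by
    have h1 : Integrable (fun p : ℝ × ℝ => G p.1 * Φ p.2) (volume.prod volume) :=
      hGi.mul_prod hΦi
    have h2 := h1.indicator (measurableSet_le measurable_fst measurable_snd)
    refine h2.congr ?_
    filter_upwards with p
    by_cases hp : p.1 ≤ p.2 <;> simp [hFdef, Set.indicator_apply, hp]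
  have swap : (∫ x, ∫ t, F (x, t)) = ∫ t, ∫ x, F (x, t) :=
    integral_integral_swap hFi
  have hL : ∀ x, (∫ t, F (x, t)) = G x * (φ d - φ x) := by
    intro x
    by_cases hx : x ∈ Set.Ioc c d
    · have h1 : ∀ t, F (x, t) = G x * (Set.Ici x).indicator Φ t := by
        intro t
        simp only [hFdef]
        by_cases ht : x ≤ t
        · rw [if_pos ht, Set.indicator_of_mem (Set.mem_Ici.2 ht)]
        · rw [if_neg ht, Set.indicator_of_notMem (by simpa using ht), mul_zero]
      simp only [h1]
      rw [MeasureTheory.integral_const_mul, integral_indicator measurableSet_Ici,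
        hΦdef, setIntegral_indicator measurableSet_Ioc]
      have he : Set.Ici x ∩ Set.Ioc c d = Set.Icc x d := by
        ext t
        simp only [Set.mem_inter_iff, Set.mem_Ici, Set.mem_Ioc, Set.mem_Icc]
        exact ⟨fun h => ⟨h.1, h.2.2⟩, fun h => ⟨h.1, lt_of_lt_of_le hx.1 h.1, h.2⟩⟩
      rw [he, integral_Icc_eq_integral_Ioc, ← intervalIntegral.integral_of_le hx.2,
        intervalIntegral.integral_eq_sub_of_hasDerivAt (fun t _ => hφ t)
          (hφc.intervalIntegrable x d)]
    · have hGx : G x = 0 := Set.indicator_of_notMem hx g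
      have h1 : ∀ t, F (x, t) = 0 := by intro t; simp [hFdef, hGx]
      simp only [h1, integral_zero, hGx, zero_mul]
  have hR : ∀ t, (∫ x, F (x, t))
      = (Set.Ioc c d).indicator (fun t => (∫ x in c..t, g x) * φ' t) t := by
    intro t
    by_cases ht : t ∈ Set.Ioc c d
    · have h1 : ∀ x, F (x, t) = (Set.Iic t).indicator G x * Φ t := by
        intro x
        simp only [hFdef]
        by_cases hx : x ≤ t
        · rw [if_pos hx, Set.indicator_of_mem (Set.mem_Iic.2 hx)]
        · rw [if_neg hx, Set.indicator_of_notMem (by simpa using hx), zero_mul]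
      simp only [h1]
      rw [show Φ t = φ' t from Set.indicator_of_mem ht φ',
        MeasureTheory.integral_mul_const, integral_indicator measurableSet_Iic,
        hGdef, setIntegral_indicator measurableSet_Ioc]
      have he : Set.Iic t ∩ Set.Ioc c d = Set.Ioc c t := by
        ext x
        simp only [Set.mem_inter_iff, Set.mem_Iic, Set.mem_Ioc]
        exact ⟨fun h => ⟨h.2.1, h.1⟩, fun h => ⟨h.2, h.1, le_trans h.2 ht.2⟩⟩
      rw [he, ← intervalIntegral.integral_of_le ht.1.le, Set.indicator_of_mem ht]
    · have hΦt : Φ t = 0 := Set.indicator_of_notMem ht φ'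
      have h1 : ∀ x, F (x, t) = 0 := by intro x; simp [hFdef, hΦt]
      simp only [h1, integral_zero, Set.indicator_of_notMem ht]
  calc ∫ x in c..d, g x * (φ d - φ x)
      = ∫ x, G x * (φ d - φ x) := by
        rw [intervalIntegral.integral_of_le hcd, ← integral_indicator measurableSet_Ioc]
        congr 1
        funext x
        by_cases hx : x ∈ Set.Ioc c d <;>
          simp [Set.indicator_apply, hx, hGdef]
    _ = ∫ x, ∫ t, F (x, t) := by simp only [hL]
    _ = ∫ t, ∫ x, F (x, t) := swap
    _ = ∫ t, (Set.Ioc c d).indicator (fun t => (∫ x in c..t, g x) * φ' t) t := by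
        simp only [hR]
    _ = ∫ t in c..d, (∫ x in c..t, g x) * φ' t := by
        rw [integral_indicator measurableSet_Ioc, intervalIntegral.integral_of_le hcd]

/-- Integration by parts against a primitive. -/
lemma ibp (c d : ℝ) (hcd : c ≤ d) (g φ φ' : ℝ → ℝ)
    (hg : IntervalIntegrable g volume c d)
    (hφ : ∀ x, HasDerivAt φ (φ' x) x) (hφc : Continuous φ') :
    ∫ x in c..d, g x * φ x
      = (∫ x in c..d, g x) * φ d - ∫ t in c..d, (∫ x in c..t, g x) * φ' t := by
  have hφcont : Continuous φ := by
    rw [continuous_iff_continuousAt]; exact fun x => (hφ x).continuousAt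
  have h1 : ∫ x in c..d, g x * φ x
      = ∫ x in c..d, (g x * φ d - g x * (φ d - φ x)) :=
    intervalIntegral.integral_congr (fun x _ => by ring)
  rw [h1, intervalIntegral.integral_sub
      (hg.mul_continuousOn continuousOn_const)
      (by exact hg.mul_continuousOn ((continuous_const.sub hφcont).continuousOn) :
          IntervalIntegrable (fun x => g x * (φ d - φ x)) volume c d),
    intervalIntegral.integral_mul_const,
    ibp_core c d hcd g φ φ' ((intervalIntegrable_iff_integrableOn_Ioc_of_le hcd).1 hg) hφ hφc]

lemma sign_const {f : ℝ → ℝ} {c d : ℝ} (hf : ContinuousOn f (Set.Icc c d))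
    (hne : ∀ x ∈ Set.Ioo c d, f x ≠ 0) {m : ℝ} (hm : m ∈ Set.Ioo c d) (hfm : 0 < f m) :
    ∀ x ∈ Set.Ioo c d, 0 < f x := by
  intro x hx
  rcases lt_or_gt_of_ne (hne x hx) with hneg | hpos
  · exfalso
    rcases lt_trichotomy x m with h | h | h
    · obtain ⟨z, hz, hfz⟩ := intermediate_value_Ioo h.le
        (hf.mono (Set.Icc_subset_Icc hx.1.le hm.2.le)) ⟨hneg, hfm⟩
      exact hne z ⟨lt_trans hx.1 hz.1, lt_trans hz.2 hm.2⟩ hfz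
    · rw [h] at hneg; linarith
    · obtain ⟨z, hz, hfz⟩ := intermediate_value_Ioo' h.le
        (hf.mono (Set.Icc_subset_Icc hm.1.le hx.2.le)) ⟨hneg, hfm⟩
      exact hne z ⟨lt_trans hm.1 hz.1, lt_trans hz.2 hx.2⟩ hfz
  · exact hpos

lemma key (c d M : ℝ) (hcd : c < d) (hM : 0 < M)
    (hMcd : Real.sqrt M * (d - c) ≤ Real.pi / 2)
    (a u v : ℝ → ℝ) (ha : IntegrableOn a (Set.Ioo c d))
    (hsol : IsSolOn a u v c d)
    (huc : u c = 0) (hvd : v d = 0)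
    (hvne : ∀ x ∈ Set.Ioo c d, v x ≠ 0)
    (hupos : ∀ x ∈ Set.Ioo c d, 0 < u x) :
    Real.sqrt M * Real.cot (Real.sqrt M * (d - c)) ≤ ∫ x in c..d, |a x - M| := by
  obtain ⟨hu_deriv, hv_eq⟩ := hsol
  set r := Real.sqrt M with hrdef
  have hr : 0 < r := Real.sqrt_pos.2 hM
  have hr2 : r * r = M := Real.mul_self_sqrt hM.le
  set s : ℝ → ℝ := fun x => Real.sin (r * (x - c)) with hsdef
  set co : ℝ → ℝ := fun x => Real.cos (r * (x - c)) with hcodef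
  have hids : ∀ x : ℝ, HasDerivAt (fun y => r * (y - c)) r x := fun x => by
    simpa using ((hasDerivAt_id x).sub_const c).const_mul r
  have hs_deriv : ∀ x, HasDerivAt s (r * co x) x := by
    intro x
    have := (Real.hasDerivAt_sin (r * (x - c))).comp x (hids x)
    simpa [hsdef, hcodef, Function.comp_def, mul_comm] using this
  have hco_deriv : ∀ x, HasDerivAt co (-(r * s x)) x := by
    intro x
    have := (Real.hasDerivAt_cos (r * (x - c))).comp x (hids x)
    simpa [hsdef, hcodef, Function.comp_def, mul_comm, neg_mul, mul_neg] using this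
  have hs_cont : Continuous s :=
    Real.continuous_sin.comp (continuous_const.mul (continuous_id.sub continuous_const))
  have hco_cont : Continuous co :=
    Real.continuous_cos.comp (continuous_const.mul (continuous_id.sub continuous_const))
  have hu_cont : ContinuousOn u (Set.Icc c d) := fun x hx =>
    (hu_deriv x hx).continuousWithinAt
  have ha_int : IntervalIntegrable a volume c d :=
    (intervalIntegrable_iff_integrableOn_Ioo_of_le hcd.le).2 ha
  have hau_int : IntervalIntegrable (fun t => a t * u t) volume c d :=
    ha_int.mul_continuousOn (by rw [Set.uIcc_of_le hcd.le]; exact hu_cont)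
  have hv_cont : ContinuousOn v (Set.Icc c d) := by
    have h1 : ContinuousOn (fun x => v c - ∫ t in c..x, a t * u t) (Set.Icc c d) := by
      apply continuousOn_const.sub
      have h2 := intervalIntegral.continuousOn_primitive_interval (μ := volume)
        (f := fun t => a t * u t) (a := c) (b := d)
        (by rw [Set.uIcc_of_le hcd.le]
            exact (intervalIntegrable_iff_integrableOn_Icc_of_le hcd.le).1 hau_int)
      rwa [Set.uIcc_of_le hcd.le] at h2
    exact h1.congr hv_eq
  have hudA : ∀ x ∈ Set.Ioo c d, HasDerivAt u (v x) x := fun x hx =>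
    (hu_deriv x (Set.Ioo_subset_Icc_self hx)).hasDerivAt (Icc_mem_nhds hx.1 hx.2)
  have hv_int : IntervalIntegrable v volume c d :=
    (by rwa [Set.uIcc_of_le hcd.le] : ContinuousOn v (Set.uIcc c d)).intervalIntegrable
  have hu_int_eq : ∀ x ∈ Set.Icc c d, u x = ∫ t in c..x, v t := by
    intro x hx
    have h := intervalIntegral.integral_eq_sub_of_hasDeriv_right_of_le hx.1
      (hu_cont.mono (Set.Icc_subset_Icc_right hx.2))
      (fun t ht =>
        (hudA t ⟨ht.1, lt_of_lt_of_le ht.2 hx.2⟩).hasDerivWithinAt)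
      (hv_int.mono_set
        (by rw [Set.uIcc_of_le hx.1, Set.uIcc_of_le hcd.le]
            exact Set.Icc_subset_Icc_right hx.2))
    rw [h, huc, sub_zero]
  have hv_pos : ∀ x ∈ Set.Ioo c d, 0 < v x := by
    intro x₀ hx₀
    rcases lt_or_gt_of_ne (hvne x₀ hx₀) with hneg | hpos
    · exfalso
      have hex : ∃ x₁ ∈ Set.Ioo c x₀, 0 < v x₁ := by
        by_contra hcon
        push_neg at hcon
        have h0 : u x₀ ≤ 0 := by
          rw [hu_int_eq x₀ (Set.Ioo_subset_Icc_self hx₀),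
            intervalIntegral.integral_of_le hx₀.1.le]
          apply setIntegral_nonpos measurableSet_Ioc
          intro t ht
          rcases eq_or_lt_of_le ht.2 with h | h
          · rw [h]; exact hneg.le
          · exact hcon t ⟨ht.1, h⟩
        linarith [hupos x₀ hx₀]
      obtain ⟨x₁, hx₁, hvx₁⟩ := hex
      obtain ⟨z, hz, hvz⟩ := intermediate_value_Ioo' hx₁.2.le
        (hv_cont.mono (Set.Icc_subset_Icc hx₁.1.le hx₀.2.le))
        ⟨hneg, hvx₁⟩
      exact hvne z ⟨lt_trans hx₁.1 hz.1, lt_trans hz.2 hx₀.2⟩ hvz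
    · exact hpos
  have hv_nonneg : ∀ t ∈ Set.Ioc c d, 0 ≤ v t := by
    intro t ht
    rcases eq_or_lt_of_le ht.2 with h | h
    · rw [h, hvd]
    · exact (hv_pos t ⟨ht.1, h⟩).le
  have hu_nonneg : ∀ x ∈ Set.Icc c d, 0 ≤ u x := by
    intro x hx
    rw [hu_int_eq x hx, intervalIntegral.integral_of_le hx.1]
    exact setIntegral_nonneg measurableSet_Ioc
      (fun t ht => hv_nonneg t ⟨ht.1, le_trans ht.2 hx.2⟩)
  have hu_le : ∀ x ∈ Set.Icc c d, u x ≤ u d := by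
    intro x hx
    have hvx_int : IntervalIntegrable v volume c x :=
      hv_int.mono_set (by
        rw [Set.uIcc_of_le hx.1, Set.uIcc_of_le hcd.le]
        exact Set.Icc_subset_Icc_right hx.2)
    have h1 : u d - u x = ∫ t in x..d, v t := by
      rw [hu_int_eq d ⟨hcd.le, le_refl d⟩, hu_int_eq x hx,
        intervalIntegral.integral_interval_sub_left hv_int hvx_int]
    have h2 : 0 ≤ ∫ t in x..d, v t := by
      rw [intervalIntegral.integral_of_le hx.2]
      exact setIntegral_nonneg measurableSet_Ioc
        (fun t ht => hv_nonneg t ⟨lt_of_le_of_lt hx.1 ht.1, ht.2⟩)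
    linarith
  have hud_pos : 0 < u d := by
    have hm : (c + d) / 2 ∈ Set.Ioo c d := ⟨by linarith, by linarith⟩
    exact lt_of_lt_of_le (hupos _ hm) (hu_le _ (Set.Ioo_subset_Icc_self hm))
  -- integrability facts
  have hu_contU : ContinuousOn u (Set.uIcc c d) := by rwa [Set.uIcc_of_le hcd.le]
  have hvco_int : IntervalIntegrable (fun x => v x * co x) volume c d :=
    hv_int.mul_continuousOn hco_cont.continuousOn
  have hus_int : IntervalIntegrable (fun x => u x * s x) volume c d :=
    (hu_contU.mul hs_cont.continuousOn).intervalIntegrable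
  have haus_int : IntervalIntegrable (fun x => a x * u x * s x) volume c d :=
    hau_int.mul_continuousOn hs_cont.continuousOn
  -- Identity Eq1 : ∫ v co = u d co d + r ∫ u s
  have hEq1 : ∫ x in c..d, (v x * co x + u x * -(r * s x)) = u d * co d - u c * co c :=
    intervalIntegral.integral_deriv_mul_eq_sub_of_hasDerivWithinAt
      (fun x hx => by
        rw [Set.uIcc_of_le hcd.le] at hx ⊢
        exact hu_deriv x hx)
      (fun x _ => (hco_deriv x).hasDerivWithinAt)
      hv_int (((continuous_const.mul hs_cont).neg).intervalIntegrable c d)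
  have hEq1' : ∫ x in c..d, v x * co x = u d * co d + r * ∫ x in c..d, u x * s x := by
    have hneg_int : IntervalIntegrable (fun x => u x * -(r * s x)) volume c d :=
      (hu_contU.mul ((continuous_const.mul hs_cont).neg.continuousOn)).intervalIntegrable
    have hsplit := intervalIntegral.integral_add hvco_int hneg_int
    have h3 : ∫ x in c..d, u x * -(r * s x) = -(r * ∫ x in c..d, u x * s x) := by
      rw [← intervalIntegral.integral_const_mul, ← intervalIntegral.integral_neg]
      exact intervalIntegral.integral_congr (fun x _ => by ring)
    rw [hEq1, h3, huc, zero_mul, sub_zero] at hsplit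
    linarith
  -- the primitive of a·u is v c − v
  have hprim : ∀ t ∈ Set.Icc c d, (∫ x in c..t, a x * u x) = v c - v t := by
    intro t ht
    have h := hv_eq t ht
    linarith
  have hIBP := ibp c d hcd.le (fun t => a t * u t) s (fun x => r * co x) hau_int
    hs_deriv (continuous_const.mul hco_cont)
  have h4 : (∫ x in c..d, a x * u x) = v c := by
    rw [hprim d ⟨hcd.le, le_refl d⟩, hvd, sub_zero]
  have hsd : ∫ t in c..d, r * co t = s d := by
    have h := intervalIntegral.integral_eq_sub_of_hasDerivAt
      (f := s) (f' := fun t => r * co t) (fun t _ => hs_deriv t)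
      ((continuous_const.mul hco_cont).intervalIntegrable c d)
    have hsc : s c = 0 := by simp [hsdef]
    rw [h, hsc, sub_zero]
  have h5 : ∫ t in c..d, (∫ x in c..t, a x * u x) * (r * co t)
      = ∫ t in c..d, (v c - v t) * (r * co t) :=
    intervalIntegral.integral_congr (fun t ht => by
      rw [hprim t (by rwa [Set.uIcc_of_le hcd.le] at ht)])
  have h6 : ∫ t in c..d, (v c - v t) * (r * co t)
      = v c * s d - r * ∫ t in c..d, v t * co t := by
    have hint1 : IntervalIntegrable (fun t => v c * (r * co t)) volume c d :=
      (continuous_const.mul (continuous_const.mul hco_cont)).intervalIntegrable c d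
    have hint2 : IntervalIntegrable (fun t => r * (v t * co t)) volume c d :=
      hvco_int.const_mul r
    have heq : ∫ t in c..d, (v c - v t) * (r * co t)
        = ∫ t in c..d, (v c * (r * co t) - r * (v t * co t)) :=
      intervalIntegral.integral_congr (fun t _ => by ring)
    rw [heq, intervalIntegral.integral_sub hint1 hint2,
      intervalIntegral.integral_const_mul, hsd, intervalIntegral.integral_const_mul]
  -- combine : ∫ (a u) s = r u d co d + M ∫ u s
  have h7 : ∫ x in c..d, a x * u x * s x
      = r * (u d * co d) + M * ∫ x in c..d, u x * s x := by
    rw [hIBP, h5, h6, h4, hEq1']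
    ring_nf
    rw [show r ^ 2 = M from by rw [sq, hr2]]
    ring
  -- hKey : ∫ (a − M) u s = r u d co d
  have hKey : ∫ x in c..d, (a x - M) * (u x * s x) = r * (u d * co d) := by
    have hsplit : ∫ x in c..d, (a x - M) * (u x * s x)
        = (∫ x in c..d, a x * u x * s x) - M * ∫ x in c..d, u x * s x := by
      rw [← intervalIntegral.integral_const_mul,
        ← intervalIntegral.integral_sub haus_int (hus_int.const_mul M)]
      exact intervalIntegral.integral_congr (fun x _ => by ring)
    rw [hsplit, h7]; ring
  -- bounds on s
  have hs_bounds : ∀ x ∈ Set.Icc c d, 0 ≤ s x ∧ s x ≤ s d := by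
    intro x hx
    have h1 : 0 ≤ r * (x - c) := mul_nonneg hr.le (by linarith [hx.1])
    have h2 : r * (x - c) ≤ r * (d - c) :=
      mul_le_mul_of_nonneg_left (by linarith [hx.2]) hr.le
    have h3 : r * (d - c) ≤ Real.pi / 2 := hMcd
    have hpi := Real.pi_pos
    constructor
    · exact Real.sin_nonneg_of_nonneg_of_le_pi h1 (by linarith)
    · exact Real.strictMonoOn_sin.monotoneOn
        ⟨by linarith, by linarith⟩ ⟨by linarith, h3⟩ h2
  have habs_int : IntervalIntegrable (fun x => |a x - M|) volume c d :=
    (ha_int.sub intervalIntegrable_const).abs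
  have haMint : IntervalIntegrable (fun x => (a x - M) * (u x * s x)) volume c d :=
    (ha_int.sub intervalIntegrable_const).mul_continuousOn
      (hu_contU.mul hs_cont.continuousOn)
  have hmono : ∫ x in c..d, (a x - M) * (u x * s x)
      ≤ (∫ x in c..d, |a x - M|) * (u d * s d) := by
    calc ∫ x in c..d, (a x - M) * (u x * s x)
        ≤ ∫ x in c..d, |a x - M| * (u d * s d) := by
          apply intervalIntegral.integral_mono_on hcd.le haMint (habs_int.mul_const _)
          intro x hx
          have h0u := hu_nonneg x hx
          have h1u := hu_le x hx
          have hs0 := (hs_bounds x hx).1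
          have hs1 := (hs_bounds x hx).2
          calc (a x - M) * (u x * s x) ≤ |a x - M| * (u x * s x) :=
                mul_le_mul_of_nonneg_right (le_abs_self _) (mul_nonneg h0u hs0)
            _ ≤ |a x - M| * (u d * s d) :=
                mul_le_mul_of_nonneg_left
                  (mul_le_mul h1u hs1 hs0 (le_trans h0u h1u)) (abs_nonneg _)
      _ = (∫ x in c..d, |a x - M|) * (u d * s d) :=
          intervalIntegral.integral_mul_const _ _
  have hsd_pos : 0 < s d := by
    apply Real.sin_pos_of_pos_of_lt_pi
    · exact mul_pos hr (by linarith)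
    · have hpi := Real.pi_pos; linarith [hMcd]
  have hIleft : r * (u d * co d) ≤ (∫ x in c..d, |a x - M|) * (u d * s d) := by
    rw [← hKey]; exact hmono
  have h8 : r * co d ≤ (∫ x in c..d, |a x - M|) * s d := by
    have h7' : (r * co d) * u d ≤ ((∫ x in c..d, |a x - M|) * s d) * u d := by
      nlinarith [hIleft]
    exact le_of_mul_le_mul_right h7' hud_pos
  have hfin : r * Real.cot (r * (d - c)) = (r * co d) / s d := by
    rw [Real.cot_eq_cos_div_sin, mul_div_assoc]
  rw [hfin, div_le_iff₀ hsd_pos]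
  exact h8


theorem stmt2 (c d M : ℝ) (hcd : c < d) (hM : 0 < M)
    (hMcd : Real.sqrt M * (d - c) ≤ Real.pi / 2)
    (a u v : ℝ → ℝ)
    (ha : IntegrableOn a (Set.Ioo c d))
    (hsol : IsSolOn a u v c d)
    (hnt : ∃ x ∈ Set.Icc c d, u x ≠ 0)
    (huc : u c = 0) (hvd : v d = 0)
    (hne : ∀ x ∈ Set.Ioo c d, u x ≠ 0 ∧ v x ≠ 0) :
    Real.sqrt M * Real.cot (Real.sqrt M * (d - c)) ≤ ∫ x in c..d, |a x - M| := by
  have hu_cont : ContinuousOn u (Set.Icc c d) := fun x hx =>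
    (hsol.1 x hx).continuousWithinAt
  have hm : (c + d) / 2 ∈ Set.Ioo c d := ⟨by linarith, by linarith⟩
  rcases lt_or_gt_of_ne (hne _ hm).1 with hneg | hpos
  · -- u negative at midpoint : use -u, -v
    have hupos : ∀ x ∈ Set.Ioo c d, 0 < -u x :=
      sign_const (hu_cont.neg) (fun x hx => neg_ne_zero.2 (hne x hx).1) hm
        (by linarith)
    have hsolneg : IsSolOn a (fun x => -u x) (fun x => -v x) c d := by
      constructor
      · intro x hx; exact (hsol.1 x hx).neg
      · intro x hx
        have h := hsol.2 x hx
        have h2 : ∫ t in c..x, a t * -u t = -∫ t in c..x, a t * u t := by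
          rw [← intervalIntegral.integral_neg]
          exact intervalIntegral.integral_congr (fun t _ => by ring)
        show -v x = -v c - ∫ t in c..x, a t * -u t
        rw [h2]
        linarith
    exact key c d M hcd hM hMcd a (fun x => -u x) (fun x => -v x) ha hsolneg
      (by show -u c = 0; rw [huc, neg_zero]) (by show -v d = 0; rw [hvd, neg_zero])
      (fun x hx => neg_ne_zero.2 (hne x hx).2) hupos
  · have hupos : ∀ x ∈ Set.Ioo c d, 0 < u x :=
      sign_const hu_cont (fun x hx => (hne x hx).1) hm hpos
    exact key c d M hcd hM hMcd a u v ha hsol huc hvd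
      (fun x hx => (hne x hx).2) hupos
end

section
/- Let a < b and 0 < M ≤ π²/(4(b−a)²) be given real numbers, and set c = √M · cot(√M (b−a)). Then for every continuously differentiable function u : [a,b] → ℝ with u(a) = 0 and u(b) ≠ 0 one has ∫_a^b u'(x)² dx − M ∫_a^b u(x)² dx ≥ c · u(b)², and equality holds if and only if u(x) = k · sin(√M (x−a)) / sin(√M (b−a)) for some nonzero constant k. -/
open MeasureTheory Set Real

set_option maxHeartbeats 1000000 in
theorem stmt3 (a b M : ℝ) (hab : a < b) (hM : 0 < M)
    (hM2 : M ≤ Real.pi ^ 2 / (4 * (b - a) ^ 2))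
    (u v : ℝ → ℝ)
    (hderiv : ∀ x ∈ Set.Icc a b, HasDerivWithinAt u (v x) (Set.Icc a b) x)
    (hcont : ContinuousOn v (Set.Icc a b))
    (hua : u a = 0) (hub : u b ≠ 0) :
    Real.sqrt M * Real.cot (Real.sqrt M * (b - a)) * u b ^ 2 ≤
      (∫ x in a..b, v x ^ 2) - M * ∫ x in a..b, u x ^ 2 ∧
    ((∫ x in a..b, v x ^ 2) - M * ∫ x in a..b, u x ^ 2 =
        Real.sqrt M * Real.cot (Real.sqrt M * (b - a)) * u b ^ 2 ↔
      ∃ k : ℝ, k ≠ 0 ∧ ∀ x ∈ Set.Icc a b,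
        u x = k * Real.sin (Real.sqrt M * (x - a)) / Real.sin (Real.sqrt M * (b - a))) := by
  obtain ⟨s, hs_def⟩ : ∃ s : ℝ, s = Real.sqrt M := ⟨_, rfl⟩
  have hL : 0 < b - a := sub_pos.mpr hab
  have hs : 0 < s := hs_def ▸ Real.sqrt_pos.mpr hM
  have hsq : s ^ 2 = M := hs_def ▸ Real.sq_sqrt hM.le
  have hθpos : 0 < s * (b - a) := mul_pos hs hL
  have hθ2 : s * (b - a) ≤ Real.pi / 2 := by
    have h1 : M ≤ (Real.pi / (2 * (b - a))) ^ 2 := by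
      rw [div_pow]; convert hM2 using 2; ring
    have h2 : s ≤ Real.pi / (2 * (b - a)) := by
      rw [hs_def]
      calc Real.sqrt M ≤ Real.sqrt ((Real.pi / (2 * (b - a))) ^ 2) := Real.sqrt_le_sqrt h1
        _ = Real.pi / (2 * (b - a)) := by
            rw [Real.sqrt_sq (by positivity)]
    calc s * (b - a) ≤ Real.pi / (2 * (b - a)) * (b - a) :=
          mul_le_mul_of_nonneg_right h2 hL.le
      _ = Real.pi / 2 := by field_simp
  have hθπ : s * (b - a) < Real.pi := lt_of_le_of_lt hθ2 (by linarith [Real.pi_pos])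
  have hsin_pos : ∀ x : ℝ, a < x → x ≤ b → 0 < Real.sin (s * (x - a)) := by
    intro x hax hxb
    apply Real.sin_pos_of_pos_of_lt_pi (by nlinarith)
    nlinarith
  have hsinθ : 0 < Real.sin (s * (b - a)) := hsin_pos b hab le_rfl
  have hu_cont : ContinuousOn u (Set.Icc a b) := fun x hx => (hderiv x hx).continuousWithinAt
  obtain ⟨c, hc⟩ : ∃ c : ℝ → ℝ, c = fun x => s * Real.cos (s * (x - a)) / Real.sin (s * (x - a)) :=
    ⟨_, rfl⟩
  have hc_cont : ∀ t, a < t → ContinuousOn c (Set.Icc t b) := by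
    intro t hat
    rw [hc]
    apply ContinuousOn.div
    · fun_prop
    · fun_prop
    · intro x hx
      exact (hsin_pos x (lt_of_lt_of_le hat hx.1) hx.2).ne'
  -- the key FTC identity on [t, b]
  have key : ∀ t, a < t → t < b →
      (∫ x in t..b, (v x ^ 2 - M * u x ^ 2)) =
        (∫ x in t..b, (v x - c x * u x) ^ 2) + (c b * u b ^ 2 - c t * u t ^ 2) := by
    intro t hat htb
    have hsub : Set.Icc t b ⊆ Set.Icc a b := Set.Icc_subset_Icc hat.le le_rfl
    have hsin_ne : ∀ x ∈ Set.Icc t b, Real.sin (s * (x - a)) ≠ 0 :=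
      fun x hx => (hsin_pos x (lt_of_lt_of_le hat hx.1) hx.2).ne'
    have hG : ∀ x ∈ Set.Ioo t b, HasDerivAt (fun y => c y * u y ^ 2)
        (-(s ^ 2 / Real.sin (s * (x - a)) ^ 2) * u x ^ 2 + c x * (2 * u x * v x)) x := by
      intro x hx
      have hxa : a < x := lt_trans hat hx.1
      have hxb : x < b := hx.2
      have hxI : Set.Icc a b ∈ nhds x := Icc_mem_nhds hxa hxb
      have hu : HasDerivAt u (v x) x :=
        ((hderiv x (hsub ⟨hx.1.le, hx.2.le⟩)).hasDerivAt hxI)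
      have harg : HasDerivAt (fun y : ℝ => s * (y - a)) s x := by
        simpa using ((hasDerivAt_id x).sub_const a).const_mul s
      have hcos : HasDerivAt (fun y => Real.cos (s * (y - a)))
          (-Real.sin (s * (x - a)) * s) x := harg.cos
      have hsin : HasDerivAt (fun y => Real.sin (s * (y - a)))
          (Real.cos (s * (x - a)) * s) x := harg.sin
      have hne : Real.sin (s * (x - a)) ≠ 0 := (hsin_pos x hxa hxb.le).ne'
      have hcd : HasDerivAt c
          ((s * (-Real.sin (s * (x - a)) * s) * Real.sin (s * (x - a)) -
            s * Real.cos (s * (x - a)) * (Real.cos (s * (x - a)) * s)) /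
              Real.sin (s * (x - a)) ^ 2) x := by
        rw [hc]; exact (hcos.const_mul s).div hsin hne
      have hu2 : HasDerivAt (fun y => u y ^ 2) (2 * u x ^ 1 * v x) x := hu.pow 2
      have := hcd.mul hu2
      refine this.congr_deriv ?_
      have hpyth := Real.sin_sq_add_cos_sq (s * (x - a))
      have hN : s * (-Real.sin (s * (x - a)) * s) * Real.sin (s * (x - a)) -
          s * Real.cos (s * (x - a)) * (Real.cos (s * (x - a)) * s) = -s ^ 2 := by
        linear_combination (-(s ^ 2)) * hpyth
      rw [hN]
      ring
    have hcontG : ContinuousOn (fun y => c y * u y ^ 2) (Set.Icc t b) :=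
      (hc_cont t hat).mul ((hu_cont.mono hsub).pow 2)
    have hcont_sin2 : ContinuousOn (fun x => -(s ^ 2 / Real.sin (s * (x - a)) ^ 2))
        (Set.Icc t b) := by
      apply ContinuousOn.neg
      apply ContinuousOn.div continuousOn_const
      · fun_prop
      · intro x hx
        exact pow_ne_zero 2 (hsin_ne x hx)
    have hcontg' : ContinuousOn
        (fun x => -(s ^ 2 / Real.sin (s * (x - a)) ^ 2) * u x ^ 2 + c x * (2 * u x * v x))
        (Set.Icc t b) := by
      apply ContinuousOn.add
      · exact hcont_sin2.mul ((hu_cont.mono hsub).pow 2)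
      · exact (hc_cont t hat).mul
          ((continuousOn_const.mul (hu_cont.mono hsub)).mul (hcont.mono hsub))
    have hint_g' : IntervalIntegrable
        (fun x => -(s ^ 2 / Real.sin (s * (x - a)) ^ 2) * u x ^ 2 + c x * (2 * u x * v x))
        volume t b := (hcontg'.mono (by rw [Set.uIcc_of_le htb.le])).intervalIntegrable
    have hint_h : IntervalIntegrable (fun x => (v x - c x * u x) ^ 2) volume t b := by
      apply ContinuousOn.intervalIntegrable
      rw [Set.uIcc_of_le htb.le]
      exact (((hcont.mono hsub).sub ((hc_cont t hat).mul (hu_cont.mono hsub))).pow 2)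
    have hftc : (∫ x in t..b,
        (-(s ^ 2 / Real.sin (s * (x - a)) ^ 2) * u x ^ 2 + c x * (2 * u x * v x))) =
        c b * u b ^ 2 - c t * u t ^ 2 :=
      intervalIntegral.integral_eq_sub_of_hasDeriv_right_of_le htb.le hcontG
        (fun x hx => (hG x hx).hasDerivWithinAt) hint_g'
    have hptwise : Set.EqOn (fun x => v x ^ 2 - M * u x ^ 2)
        (fun x => (v x - c x * u x) ^ 2 +
          (-(s ^ 2 / Real.sin (s * (x - a)) ^ 2) * u x ^ 2 + c x * (2 * u x * v x)))
        (Set.uIcc t b) := by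
      intro x hx
      rw [Set.uIcc_of_le htb.le] at hx
      have hne := hsin_ne x hx
      have hpyth := Real.sin_sq_add_cos_sq (s * (x - a))
      show v x ^ 2 - M * u x ^ 2 = (v x - c x * u x) ^ 2 +
        (-(s ^ 2 / Real.sin (s * (x - a)) ^ 2) * u x ^ 2 + c x * (2 * u x * v x))
      have hC : c x = s * Real.cos (s * (x - a)) / Real.sin (s * (x - a)) := by rw [hc]
      rw [hC, ← hsq]
      field_simp
      linear_combination (-(s ^ 2 * u x ^ 2)) * hpyth
    rw [intervalIntegral.integral_congr hptwise,
      intervalIntegral.integral_add hint_h hint_g', hftc]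
  -- limits
  obtain ⟨l, hl_def⟩ : ∃ l : Filter ℝ, l = nhdsWithin a (Set.Ioo a b) := ⟨_, rfl⟩
  have hl_ne : l.NeBot := hl_def ▸ left_nhdsWithin_Ioo_neBot hab
  have hl_mem : ∀ᶠ t in l, t ∈ Set.Ioo a b := hl_def ▸ eventually_mem_nhdsWithin
  have tendsto_I : Filter.Tendsto (fun t => ∫ x in t..b, (v x ^ 2 - M * u x ^ 2)) l
      (nhds (∫ x in a..b, (v x ^ 2 - M * u x ^ 2))) := by
    have hf_cont : ContinuousOn (fun x => v x ^ 2 - M * u x ^ 2) (Set.Icc a b) :=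
      (hcont.pow 2).sub (continuousOn_const.mul (hu_cont.pow 2))
    have hf_int : IntervalIntegrable (fun x => v x ^ 2 - M * u x ^ 2) volume a b := by
      apply ContinuousOn.intervalIntegrable
      rwa [Set.uIcc_of_le hab.le]
    have hP : ContinuousOn (fun t => ∫ x in a..t, (v x ^ 2 - M * u x ^ 2)) (Set.Icc a b) := by
      have h1 : IntegrableOn (fun x => v x ^ 2 - M * u x ^ 2) (Set.uIcc a b) volume := by
        rw [Set.uIcc_of_le hab.le]
        exact hf_cont.integrableOn_Icc
      have := intervalIntegral.continuousOn_primitive_interval h1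
      rwa [Set.uIcc_of_le hab.le] at this
    have hPt : Filter.Tendsto (fun t => ∫ x in a..t, (v x ^ 2 - M * u x ^ 2)) l (nhds 0) := by
      have h2 := (hP a ⟨le_refl a, hab.le⟩).tendsto
      rw [intervalIntegral.integral_same] at h2
      exact h2.mono_left (hl_def ▸ nhdsWithin_mono a Set.Ioo_subset_Icc_self)
    have h3 : Filter.Tendsto
        (fun t => (∫ x in a..b, (v x ^ 2 - M * u x ^ 2)) -
          ∫ x in a..t, (v x ^ 2 - M * u x ^ 2)) l
        (nhds (∫ x in a..b, (v x ^ 2 - M * u x ^ 2))) := by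
      have := (tendsto_const_nhds (x := ∫ x in a..b, (v x ^ 2 - M * u x ^ 2)) (f := l)).sub hPt
      simpa using this
    apply h3.congr'
    filter_upwards [hl_mem] with t ht
    have hi1 : IntervalIntegrable (fun x => v x ^ 2 - M * u x ^ 2) volume a t :=
      hf_int.mono_set (by
        rw [Set.uIcc_of_le ht.1.le, Set.uIcc_of_le hab.le]
        exact Set.Icc_subset_Icc le_rfl ht.2.le)
    have hi2 : IntervalIntegrable (fun x => v x ^ 2 - M * u x ^ 2) volume t b :=
      hf_int.mono_set (by
        rw [Set.uIcc_of_le ht.2.le, Set.uIcc_of_le hab.le]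
        exact Set.Icc_subset_Icc ht.1.le le_rfl)
    have hadd := intervalIntegral.integral_add_adjacent_intervals hi1 hi2
    linarith [hadd]
  have tendsto_G : Filter.Tendsto (fun t => c t * u t ^ 2) l (nhds 0) := by
    have hlIcc : l ≤ nhdsWithin a (Set.Icc a b) :=
      hl_def ▸ nhdsWithin_mono a Set.Ioo_subset_Icc_self
    have tu : Filter.Tendsto u l (nhds 0) := by
      have h2 := (hu_cont a ⟨le_refl a, hab.le⟩).tendsto
      rw [hua] at h2
      exact h2.mono_left hlIcc
    have tslope : Filter.Tendsto (fun t => u t / (t - a)) l (nhds (v a)) := by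
      have h1 := hasDerivWithinAt_iff_tendsto_slope.mp (hderiv a ⟨le_refl a, hab.le⟩)
      have h2 : Filter.Tendsto (slope u a) l (nhds (v a)) := by
        apply h1.mono_left
        rw [hl_def]
        apply nhdsWithin_mono
        intro x hx
        exact ⟨Set.Ioo_subset_Icc_self hx, by simp; exact ne_of_gt hx.1⟩
      apply h2.congr
      intro t
      rw [slope_def_field, hua, sub_zero]
    have tcos : Filter.Tendsto (fun t => Real.cos (s * (t - a))) l (nhds 1) := by
      have h1 : Filter.Tendsto (fun t : ℝ => Real.cos (s * (t - a))) (nhds a)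
          (nhds (Real.cos (s * (a - a)))) := by
        apply Continuous.tendsto
        fun_prop
      simp only [sub_self, mul_zero, Real.cos_zero] at h1
      exact h1.mono_left (hl_def ▸ nhdsWithin_le_nhds)
    have tratio : Filter.Tendsto (fun t => Real.sin (s * (t - a)) / (s * (t - a))) l
        (nhds 1) := by
      have h1 : Filter.Tendsto (slope Real.sin 0) (nhdsWithin 0 {(0:ℝ)}ᶜ) (nhds 1) := by
        have := hasDerivAt_iff_tendsto_slope.mp (Real.hasDerivAt_sin 0)
        simpa using this
      have h2 : Filter.Tendsto (fun t : ℝ => s * (t - a)) l (nhdsWithin 0 {(0:ℝ)}ᶜ) := by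
        rw [tendsto_nhdsWithin_iff]
        constructor
        · have h3 : Filter.Tendsto (fun t : ℝ => s * (t - a)) (nhds a)
              (nhds (s * (a - a))) := by
            apply Continuous.tendsto
            fun_prop
          simp only [sub_self, mul_zero] at h3
          exact h3.mono_left (hl_def ▸ nhdsWithin_le_nhds)
        · filter_upwards [hl_mem] with t ht
          exact (mul_pos hs (sub_pos.mpr ht.1)).ne'
      have h4 := h1.comp h2
      apply h4.congr
      intro t
      simp [slope_def_field]
    have hprod : Filter.Tendsto
        (fun t => Real.cos (s * (t - a)) * (u t / (t - a)) * u t *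
          (Real.sin (s * (t - a)) / (s * (t - a)))⁻¹) l
        (nhds (1 * v a * 0 * 1⁻¹)) :=
      ((tcos.mul tslope).mul tu).mul (tratio.inv₀ one_ne_zero)
    simp only [mul_zero, zero_mul, inv_one, one_mul] at hprod
    apply hprod.congr'
    filter_upwards [hl_mem] with t ht
    have h5 : t - a ≠ 0 := (sub_pos.mpr ht.1).ne'
    have h6 : Real.sin (s * (t - a)) ≠ 0 := (hsin_pos t ht.1 ht.2.le).ne'
    rw [hc]
    field_simp
    
  have tendsto_J : Filter.Tendsto (fun t => ∫ x in t..b, (v x - c x * u x) ^ 2) l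
      (nhds ((∫ x in a..b, (v x ^ 2 - M * u x ^ 2)) - c b * u b ^ 2)) := by
    have h1 : Filter.Tendsto
        (fun t => (∫ x in t..b, (v x ^ 2 - M * u x ^ 2)) - c b * u b ^ 2 + c t * u t ^ 2) l
        (nhds ((∫ x in a..b, (v x ^ 2 - M * u x ^ 2)) - c b * u b ^ 2)) := by
      have := (tendsto_I.sub_const (c b * u b ^ 2)).add tendsto_G
      simpa using this
    apply h1.congr'
    filter_upwards [hl_mem] with t ht
    rw [key t ht.1 ht.2]; ring
  have hJ_nonneg : ∀ t, t ≤ b → 0 ≤ ∫ x in t..b, (v x - c x * u x) ^ 2 := fun t h =>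
    intervalIntegral.integral_nonneg h (fun x _ => sq_nonneg _)
  have hIa_split : (∫ x in a..b, (v x ^ 2 - M * u x ^ 2)) =
      (∫ x in a..b, v x ^ 2) - M * ∫ x in a..b, u x ^ 2 := by
    have h1 : IntervalIntegrable (fun x => v x ^ 2) volume a b := by
      apply ContinuousOn.intervalIntegrable
      rw [Set.uIcc_of_le hab.le]
      exact hcont.pow 2
    have h2 : IntervalIntegrable (fun x => M * u x ^ 2) volume a b := by
      apply ContinuousOn.intervalIntegrable
      rw [Set.uIcc_of_le hab.le]
      exact continuousOn_const.mul (hu_cont.pow 2)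
    rw [intervalIntegral.integral_sub h1 h2, intervalIntegral.integral_const_mul]
  have hGb : c b * u b ^ 2 = Real.sqrt M * Real.cot (Real.sqrt M * (b - a)) * u b ^ 2 := by
    rw [hc, Real.cot_eq_cos_div_sin, hs_def]
    ring
  have main_ineq : c b * u b ^ 2 ≤ ∫ x in a..b, (v x ^ 2 - M * u x ^ 2) := by
    have h0 : (0:ℝ) ≤ (∫ x in a..b, (v x ^ 2 - M * u x ^ 2)) - c b * u b ^ 2 :=
      ge_of_tendsto tendsto_J (by filter_upwards [hl_mem] with t ht; exact hJ_nonneg t ht.2.le)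
    linarith
  constructor
  · rw [← hIa_split, ← hGb]; exact main_ineq
  constructor
  · -- equality implies extremal
    intro heq
    have heq' : (∫ x in a..b, (v x ^ 2 - M * u x ^ 2)) = c b * u b ^ 2 := by
      rw [hIa_split, hGb]; exact heq
    have tendsto_J0 : Filter.Tendsto (fun t => ∫ x in t..b, (v x - c x * u x) ^ 2) l
        (nhds 0) := by
      have := tendsto_J
      rw [heq', sub_self] at this
      exact this
    have hJzero : ∀ t, a < t → t < b → (∫ x in t..b, (v x - c x * u x) ^ 2) = 0 := by
      intro t hat htb
      have hint_h : ∀ t', a < t' → t' ≤ b → IntervalIntegrable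
          (fun x => (v x - c x * u x) ^ 2) volume t' b := by
        intro t' hat' ht'b
        apply ContinuousOn.intervalIntegrable
        rw [Set.uIcc_of_le ht'b]
        have hsub : Set.Icc t' b ⊆ Set.Icc a b := Set.Icc_subset_Icc hat'.le le_rfl
        exact ((hcont.mono hsub).sub ((hc_cont t' hat').mul (hu_cont.mono hsub))).pow 2
      have hmono : ∀ᶠ t' in l, (∫ x in t..b, (v x - c x * u x) ^ 2) ≤
          ∫ x in t'..b, (v x - c x * u x) ^ 2 := by
        have hev : ∀ᶠ t' in l, t' < t :=
          (gt_mem_nhds hat).filter_mono (hl_def ▸ nhdsWithin_le_nhds)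
        filter_upwards [hl_mem, hev] with t' ht' hlt
        have hi1 : IntervalIntegrable (fun x => (v x - c x * u x) ^ 2) volume t' t :=
          (hint_h t' ht'.1 ht'.2.le).mono_set (by
            rw [Set.uIcc_of_le hlt.le, Set.uIcc_of_le ht'.2.le]
            exact Set.Icc_subset_Icc le_rfl htb.le)
        have hi2 : IntervalIntegrable (fun x => (v x - c x * u x) ^ 2) volume t b :=
          hint_h t hat htb.le
        have hadd := intervalIntegral.integral_add_adjacent_intervals hi1 hi2
        have hpos : 0 ≤ ∫ x in t'..t, (v x - c x * u x) ^ 2 :=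
          intervalIntegral.integral_nonneg hlt.le (fun x _ => sq_nonneg _)
        linarith [hadd]
      have hle := ge_of_tendsto tendsto_J0 hmono
      have hge := hJ_nonneg t htb.le
      linarith
    have hveq : ∀ x ∈ Set.Ioo a b, v x = c x * u x := by
      intro x hx
      obtain ⟨t, hat, htx⟩ : ∃ t, a < t ∧ t < x := ⟨(a + x) / 2, by linarith [hx.1], by linarith [hx.1]⟩
      have htb : t < b := htx.trans hx.2
      have h0 := hJzero t hat htb
      have hsub : Set.Icc t b ⊆ Set.Icc a b := Set.Icc_subset_Icc hat.le le_rfl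
      have hhcont : ContinuousOn (fun x => (v x - c x * u x) ^ 2) (Set.Icc t b) :=
        ((hcont.mono hsub).sub ((hc_cont t hat).mul (hu_cont.mono hsub))).pow 2
      have hint_h : IntervalIntegrable (fun x => (v x - c x * u x) ^ 2) volume t b := by
        apply ContinuousOn.intervalIntegrable
        rwa [Set.uIcc_of_le htb.le]
      have hae : (fun x => (v x - c x * u x) ^ 2) =ᵐ[volume.restrict (Set.Ioc t b)]
          (0 : ℝ → ℝ) :=
        (intervalIntegral.integral_eq_zero_iff_of_le_of_nonneg_ae htb.le
          (Filter.Eventually.of_forall fun y => sq_nonneg _) hint_h).mp h0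
      have hae2 : (fun x => (v x - c x * u x) ^ 2) =ᵐ[volume.restrict (Set.Ioo t b)]
          (0 : ℝ → ℝ) :=
        ae_restrict_of_ae_restrict_of_subset Set.Ioo_subset_Ioc_self hae
      have heqon : Set.EqOn (fun x => (v x - c x * u x) ^ 2) (0 : ℝ → ℝ) (Set.Ioo t b) :=
        Measure.eqOn_open_of_ae_eq hae2 isOpen_Ioo
          (hhcont.mono (Set.Ioo_subset_Icc_self)) continuousOn_const
      have hx0 := heqon ⟨htx, hx.2⟩
      have hx1 : (v x - c x * u x) ^ 2 = 0 := hx0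
      have hx2 : v x - c x * u x = 0 := by
        nlinarith [sq_nonneg (v x - c x * u x)]
      linarith [hx2]
    refine ⟨u b, hub, ?_⟩
    intro x hx
    rw [← hs_def]
    rcases eq_or_lt_of_le hx.1 with hax | hax
    · rw [← hax, hua]
      simp
    · rcases eq_or_lt_of_le hx.2 with hxb | hxb
      · rw [hxb, mul_div_assoc, div_self hsinθ.ne', mul_one]
      · -- a < x < b : use the ODE on [x, b]
        have hsinx : 0 < Real.sin (s * (x - a)) := hsin_pos x hax hxb.le
        have hsub : Set.Icc x b ⊆ Set.Icc a b := Set.Icc_subset_Icc hax.le le_rfl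
        have hcontW : ContinuousOn (fun y => u y / Real.sin (s * (y - a))) (Set.Icc x b) := by
          apply ContinuousOn.div (hu_cont.mono hsub)
          · fun_prop
          · intro y hy
            exact (hsin_pos y (lt_of_lt_of_le hax hy.1) hy.2).ne'
        have hderivW : ∀ y ∈ Set.Ico x b,
            HasDerivWithinAt (fun y => u y / Real.sin (s * (y - a))) 0 (Set.Ici y) y := by
          intro y hy
          have hya : a < y := lt_of_lt_of_le hax hy.1
          have hyb : y < b := hy.2
          have hyI : Set.Icc a b ∈ nhds y := Icc_mem_nhds hya hyb
          have hu : HasDerivAt u (v y) y := (hderiv y ⟨hya.le, hyb.le⟩).hasDerivAt hyI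
          have harg : HasDerivAt (fun z : ℝ => s * (z - a)) s y := by
            simpa using ((hasDerivAt_id y).sub_const a).const_mul s
          have hsiny : HasDerivAt (fun z => Real.sin (s * (z - a)))
              (Real.cos (s * (y - a)) * s) y := harg.sin
          have hne : Real.sin (s * (y - a)) ≠ 0 := (hsin_pos y hya hyb.le).ne'
          have hd := hu.div hsiny hne
          have hval : (v y * Real.sin (s * (y - a)) - u y * (Real.cos (s * (y - a)) * s)) /
              Real.sin (s * (y - a)) ^ 2 = 0 := by
            rw [hveq y ⟨hya, hyb⟩, hc]
            field_simp
            ring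
          rw [hval] at hd
          exact hd.hasDerivWithinAt
        have hW := constant_of_has_deriv_right_zero hcontW hderivW b ⟨hxb.le, le_rfl⟩
        -- hW : u b / sin (s (b - a)) = u x / sin (s (x - a))
        field_simp at hW ⊢
        linarith [hW]
  · -- extremal implies equality
    rintro ⟨k, hk, hk_eq⟩
    rw [← hs_def] at hk_eq
    obtain ⟨K, hK⟩ : ∃ K : ℝ, K = k / Real.sin (s * (b - a)) := ⟨_, rfl⟩
    have hk_eq' : ∀ x ∈ Set.Icc a b, u x = K * Real.sin (s * (x - a)) := by
      intro x hx
      rw [hk_eq x hx, hK]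
      ring
    have hv_eq : ∀ x ∈ Set.Icc a b, v x = K * (Real.cos (s * (x - a)) * s) := by
      intro x hx
      have hd1 := hderiv x hx
      have harg : HasDerivAt (fun y : ℝ => s * (y - a)) s x := by
        simpa using ((hasDerivAt_id x).sub_const a).const_mul s
      have hd2 : HasDerivWithinAt (fun y => K * Real.sin (s * (y - a)))
          (K * (Real.cos (s * (x - a)) * s)) (Set.Icc a b) x :=
        ((harg.sin).const_mul K).hasDerivWithinAt
      have hd1' : HasDerivWithinAt (fun y => K * Real.sin (s * (y - a))) (v x)
          (Set.Icc a b) x :=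
        hd1.congr (fun y hy => (hk_eq' y hy).symm) (hk_eq' x hx).symm
      have hud := (uniqueDiffOn_Icc hab) x hx
      rw [← hd1'.derivWithin hud, hd2.derivWithin hud]
    have hub' : u b = K * Real.sin (s * (b - a)) := hk_eq' b ⟨hab.le, le_rfl⟩
    have hIcos : (∫ x in a..b, (v x ^ 2 - M * u x ^ 2)) =
        K ^ 2 * M * (Real.sin (s * (b - a)) * Real.cos (s * (b - a)) / s) := by
      have hcongr : Set.EqOn (fun x => v x ^ 2 - M * u x ^ 2)
          (fun x => K ^ 2 * M *
            (Real.cos (s * (x - a)) ^ 2 - Real.sin (s * (x - a)) ^ 2)) (Set.uIcc a b) := by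
        intro x hx
        rw [Set.uIcc_of_le hab.le] at hx
        show v x ^ 2 - M * u x ^ 2 = _
        rw [hv_eq x hx, hk_eq' x hx, ← hsq]
        ring
      rw [intervalIntegral.integral_congr hcongr]
      have hF : ∀ x : ℝ, HasDerivAt
          (fun y => K ^ 2 * M * (Real.sin (s * (y - a)) * Real.cos (s * (y - a)) / s))
          (K ^ 2 * M * (Real.cos (s * (x - a)) ^ 2 - Real.sin (s * (x - a)) ^ 2)) x := by
        intro x
        have harg : HasDerivAt (fun y : ℝ => s * (y - a)) s x := by
          simpa using ((hasDerivAt_id x).sub_const a).const_mul s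
        have hsin : HasDerivAt (fun y => Real.sin (s * (y - a)))
            (Real.cos (s * (x - a)) * s) x := harg.sin
        have hcos : HasDerivAt (fun y => Real.cos (s * (y - a)))
            (-Real.sin (s * (x - a)) * s) x := harg.cos
        have := (((hsin.mul hcos).div_const s).const_mul (K ^ 2 * M))
        refine this.congr_deriv ?_
        field_simp
        ring
      have hint : IntervalIntegrable
          (fun x => K ^ 2 * M * (Real.cos (s * (x - a)) ^ 2 - Real.sin (s * (x - a)) ^ 2))
          volume a b := by
        apply Continuous.intervalIntegrable
        fun_prop
      rw [intervalIntegral.integral_eq_sub_of_hasDerivAt (fun x _ => hF x) hint]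
      simp
    rw [← hIa_split, ← hGb, hIcos, hc, hub', ← hsq]
    show K ^ 2 * s ^ 2 * (Real.sin (s * (b - a)) * Real.cos (s * (b - a)) / s) =
      s * Real.cos (s * (b - a)) / Real.sin (s * (b - a)) * (K * Real.sin (s * (b - a))) ^ 2
    field_simp
end

section
/- Let α ∈ (0, π/2) and x₀ ∈ (0, π) be given, and define a_{α,x₀} : (0,π) → ℝ by a_{α,x₀}(x) = α²/x₀² for x ∈ (0,x₀) and a_{α,x₀}(x) = α²/(π−x₀)² for x ∈ (x₀,π). Then the antiperiodic boundary value problem u''(x) + a_{α,x₀}(x)u(x) = 0 on (0,π), u(0) + u(π) = 0, u'(0) + u'(π) = 0, has a nontrivial solution if and only if x₀ = (π/2)(1 − cos α) or x₀ = (π/2)(1 + cos α). -/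
open MeasureTheory Set Real intervalIntegral

lemma trig_hasDerivAt (p q k c x : ℝ) :
    HasDerivAt (fun y => p * Real.cos (k*(y-c)) + q * Real.sin (k*(y-c)))
      (k * (-p * Real.sin (k*(x-c)) + q * Real.cos (k*(x-c)))) x := by
  have h : HasDerivAt (fun y : ℝ => k*(y-c)) k x := by
    simpa using ((hasDerivAt_id x).sub_const c).const_mul k
  have h1 := (Real.hasDerivAt_cos (k*(x-c))).comp x h
  have h2 := (Real.hasDerivAt_sin (k*(x-c))).comp x h
  have h3 := (h1.const_mul p).add (h2.const_mul q)
  refine h3.congr_deriv ?_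
  ring

lemma rep {k c d : ℝ} (hk : 0 < k) (hcd : c < d) {u v : ℝ → ℝ}
    (hu : ∀ x ∈ Icc c d, HasDerivWithinAt u (v x) (Icc c d) x)
    (hv : ∀ x ∈ Icc c d, v x = v c - k^2 * ∫ t in c..x, u t) :
    ∀ x ∈ Icc c d,
      u x = u c * Real.cos (k*(x-c)) + (v c / k) * Real.sin (k*(x-c)) ∧
      v x = k * (-(u c) * Real.sin (k*(x-c)) + (v c / k) * Real.cos (k*(x-c))) := by
  set p := u c with hp
  set q := v c / k with hq
  have hqk : q * k = v c := by rw [hq]; exact div_mul_cancel₀ _ hk.ne'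
  set U : ℝ → ℝ := fun y => p * Real.cos (k*(y-c)) + q * Real.sin (k*(y-c)) with hU
  set V : ℝ → ℝ := fun y => k * (-p * Real.sin (k*(y-c)) + q * Real.cos (k*(y-c))) with hV
  have hUd : ∀ x, HasDerivAt U (V x) x := fun x => trig_hasDerivAt p q k c x
  have hUcont : Continuous U := by rw [hU]; fun_prop
  have hVcont : Continuous V := by rw [hV]; fun_prop
  have hVd : ∀ x, HasDerivAt V (-k^2 * U x) x := by
    intro x
    have hfun : V = fun y => (q*k) * Real.cos (k*(y-c)) + (-(p*k)) * Real.sin (k*(y-c)) := by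
      funext y; simp only [hV]; ring
    rw [hfun]
    have h := trig_hasDerivAt (q*k) (-(p*k)) k c x
    rw [show k * (-(q*k) * Real.sin (k*(x-c)) + (-(p*k)) * Real.cos (k*(x-c)))
        = -k^2 * U x from by simp only [hU]; ring] at h
    exact h
  have hucont : ContinuousOn u (Icc c d) := fun x hx => (hu x hx).continuousWithinAt
  have huint : IntegrableOn u (Icc c d) := hucont.integrableOn_Icc
  set N : ℝ → ℝ := fun x => ∫ t in c..x, u t with hN
  have hNcont : ContinuousOn N (Icc c d) := by
    have := continuousOn_primitive_interval (a := c) (b := d) (μ := volume)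
      (by rwa [uIcc_of_le hcd.le])
    rwa [uIcc_of_le hcd.le] at this
  have hvcont : ContinuousOn v (Icc c d) :=
    (continuousOn_const.sub (continuousOn_const.mul hNcont)).congr (fun x hx => hv x hx)
  have hNd : ∀ x ∈ Ico c d, HasDerivWithinAt N (u x) (Ici x) x := by
    intro x hx
    apply intervalIntegral.integral_hasDerivWithinAt_right (t := Ioi x)
    · exact (hucont.mono (by rw [uIcc_of_le hx.1]; exact Icc_subset_Icc le_rfl hx.2.le)).intervalIntegrable
    · exact ⟨Icc x d, Filter.mem_of_superset
        (Ioc_mem_nhdsGT_of_mem ⟨le_rfl, hx.2⟩) Ioc_subset_Icc_self,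
        ((hucont.mono (Icc_subset_Icc hx.1 le_rfl)).aestronglyMeasurable measurableSet_Icc)⟩
    · exact ((hucont x ⟨hx.1, hx.2.le⟩).mono_of_mem_nhdsWithin
        (Filter.mem_of_superset (Icc_mem_nhdsGE_of_mem ⟨le_rfl, hx.2⟩)
          (Icc_subset_Icc hx.1 le_rfl))).mono Ioi_subset_Ici_self
  have hvd : ∀ x ∈ Ico c d, HasDerivWithinAt v (-k^2 * u x) (Ici x) x := by
    intro x hx
    have h1 : HasDerivWithinAt (fun y => v c - k^2 * N y) (-k^2 * u x) (Ici x) x := by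
      have h2 := ((hNd x hx).const_mul (k^2)).neg.const_add (v c)
      exact h2.congr_deriv (by ring)
    apply h1.congr_of_eventuallyEq_of_mem _ (self_mem_Ici)
    filter_upwards [Icc_mem_nhdsGE_of_mem (⟨le_rfl, hx.2⟩ : x ∈ Ico x d)] with y hy
    exact hv y ⟨hx.1.trans hy.1, hy.2⟩
  set w : ℝ → ℝ := fun x => u x - U x with hw
  set z : ℝ → ℝ := fun x => v x - V x with hz
  have hwcont : ContinuousOn w (Icc c d) := hucont.sub hUcont.continuousOn
  have hzcont : ContinuousOn z (Icc c d) := hvcont.sub hVcont.continuousOn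
  set E : ℝ → ℝ := fun x => k^2 * (w x)^2 + (z x)^2 with hE
  have hEcont : ContinuousOn E (Icc c d) :=
    (continuousOn_const.mul (hwcont.pow 2)).add (hzcont.pow 2)
  have hEd : ∀ x ∈ Ico c d, HasDerivWithinAt E 0 (Ici x) x := by
    intro x hx
    have hwd : HasDerivWithinAt w (z x) (Ici x) x := by
      have hu' : HasDerivWithinAt u (v x) (Ici x) x :=
        (hu x ⟨hx.1, hx.2.le⟩).mono_of_mem_nhdsWithin
          (Filter.mem_of_superset (Icc_mem_nhdsGE_of_mem ⟨le_rfl, hx.2⟩)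
            (Icc_subset_Icc hx.1 le_rfl))
      exact hu'.sub (hUd x).hasDerivWithinAt
    have hzd : HasDerivWithinAt z (-k^2 * w x) (Ici x) x := by
      have h3 := (hvd x hx).sub (hVd x).hasDerivWithinAt
      exact h3.congr_deriv (by simp only [hw]; ring)
    have h1 := ((hwd.pow 2).const_mul (k^2)).add (hzd.pow 2)
    exact h1.congr_deriv (by norm_num; ring)
  have hEconst := constant_of_has_deriv_right_zero hEcont hEd
  have hEc : E c = 0 := by
    have hwc : w c = 0 := by simp [hw, hU, hp]
    have hzc : z c = 0 := by
      simp only [hz, hV, sub_self, mul_zero, Real.sin_zero, Real.cos_zero, neg_mul,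
        zero_add, mul_one, neg_zero]
      rw [hq]
      field_simp
      ring
    simp [hE, hwc, hzc]
  intro x hx
  have hEx : E x = 0 := by rw [hEconst x hx, hEc]
  have h2 : (k * w x)^2 + (z x)^2 = 0 := by
    rw [show (k * w x)^2 + (z x)^2 = E x from by simp only [hE]; ring, hEx]
  have h3 := (add_eq_zero_iff_of_nonneg (sq_nonneg _) (sq_nonneg _)).mp h2
  have hw0 : w x = 0 := by
    have h4 := (pow_eq_zero_iff two_ne_zero).mp h3.1
    rcases mul_eq_zero.mp h4 with h | h
    · exact absurd h hk.ne'
    · exact h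
  have hz0 : z x = 0 := (pow_eq_zero_iff two_ne_zero).mp h3.2
  constructor
  · simp only [hw, hU] at hw0; linarith
  · simp only [hz, hV] at hz0; linarith

lemma trig_int (p q k c x : ℝ) :
    ∫ t in c..x, k^2 * (p * Real.cos (k*(t-c)) + q * Real.sin (k*(t-c)))
      = q*k - (k * (-p * Real.sin (k*(x-c)) + q * Real.cos (k*(x-c)))) := by
  have hfun : (fun y => -(k * (-p * Real.sin (k*(y-c)) + q * Real.cos (k*(y-c)))))
      = (fun y => (-(q*k)) * Real.cos (k*(y-c)) + (p*k) * Real.sin (k*(y-c))) := by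
    funext y; ring
  have hd : ∀ t ∈ uIcc c x,
      HasDerivAt (fun y => -(k * (-p * Real.sin (k*(y-c)) + q * Real.cos (k*(y-c)))))
        (k^2 * (p * Real.cos (k*(t-c)) + q * Real.sin (k*(t-c)))) t := by
    intro t _
    rw [hfun]
    have h := trig_hasDerivAt (-(q*k)) (p*k) k c t
    rw [show k * (-(-(q*k)) * Real.sin (k*(t-c)) + (p*k) * Real.cos (k*(t-c)))
        = k^2*(p*Real.cos (k*(t-c)) + q*Real.sin (k*(t-c))) from by ring] at h
    exact h
  have hint : IntervalIntegrable
      (fun t => k^2 * (p * Real.cos (k*(t-c)) + q * Real.sin (k*(t-c)))) volume c x := by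
    apply Continuous.intervalIntegrable; fun_prop
  rw [intervalIntegral.integral_eq_sub_of_hasDerivAt hd hint]
  simp [Real.sin_zero, Real.cos_zero]
  ring

open MeasureTheory Set Real

/-- The piecewise constant coefficient `a_{α,x₀}`. -/
noncomputable def aPiece (α x₀ : ℝ) : ℝ → ℝ := fun x =>
  if x < x₀ then α ^ 2 / x₀ ^ 2 else α ^ 2 / (Real.pi - x₀) ^ 2

set_option maxHeartbeats 1000000 in
theorem stmt13 (α x₀ : ℝ) (hα : α ∈ Set.Ioo 0 (Real.pi / 2))
    (hx₀ : x₀ ∈ Set.Ioo 0 Real.pi) :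
    (∃ u v : ℝ → ℝ, IsSolOn (aPiece α x₀) u v 0 Real.pi ∧
        u 0 + u Real.pi = 0 ∧ v 0 + v Real.pi = 0 ∧
        ∃ x ∈ Set.Icc 0 Real.pi, u x ≠ 0) ↔
    (x₀ = Real.pi / 2 * (1 - Real.cos α) ∨ x₀ = Real.pi / 2 * (1 + Real.cos α)) := by
  obtain ⟨hα0, hαpi⟩ := hα
  obtain ⟨hx0, hxpi⟩ := hx₀
  have hπ : (0:ℝ) < Real.pi := Real.pi_pos
  have hy0 : (0:ℝ) < Real.pi - x₀ := by linarith
  set sα := Real.sin α with hsα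
  set cα := Real.cos α with hcα
  have hs : 0 < sα := Real.sin_pos_of_pos_of_lt_pi hα0 (by linarith)
  have hc : 0 < cα := Real.cos_pos_of_mem_Ioo ⟨by linarith, hαpi⟩
  have hsc : sα^2 + cα^2 = 1 := Real.sin_sq_add_cos_sq α
  set k₁ := α / x₀ with hk₁def
  set k₂ := α / (Real.pi - x₀) with hk₂def
  have hk₁ : 0 < k₁ := div_pos hα0 hx0
  have hk₂ : 0 < k₂ := div_pos hα0 hy0
  have hk₁x : k₁ * x₀ = α := div_mul_cancel₀ α hx0.ne'
  have hk₂y : k₂ * (Real.pi - x₀) = α := div_mul_cancel₀ α hy0.ne'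
  have hαne : α ≠ 0 := hα0.ne'
  have hx0ne : x₀ ≠ 0 := hx0.ne'
  have hy0ne : Real.pi - x₀ ≠ 0 := hy0.ne'
  have haP1 : ∀ t : ℝ, t < x₀ → aPiece α x₀ t = k₁^2 := by
    intro t ht; simp only [aPiece, if_pos ht, hk₁def, div_pow]
  have haP2 : ∀ t : ℝ, x₀ ≤ t → aPiece α x₀ t = k₂^2 := by
    intro t ht; simp only [aPiece, if_neg (not_lt.mpr ht), hk₂def, div_pow]
  constructor
  · -- forward direction
    rintro ⟨u, v, ⟨hu, hv⟩, hbc1, hbc2, x₁, hx₁, hux₁⟩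
    have hucont : ContinuousOn u (Icc 0 Real.pi) := fun x hx => (hu x hx).continuousWithinAt
    set g : ℝ → ℝ := fun t => aPiece α x₀ t * u t with hg
    -- integrability
    have hg1 : IntervalIntegrable g volume 0 x₀ := by
      have hInt1 : IntervalIntegrable (fun t => k₁^2 * u t) volume 0 x₀ :=
        (continuousOn_const.mul (hucont.mono (by
          rw [uIcc_of_le hx0.le]; exact Icc_subset_Icc le_rfl hxpi.le))).intervalIntegrable
      apply hInt1.congr_ae
      have h0 : (volume.restrict (uIoc (0:ℝ) x₀)) {x₀} = 0 :=
        le_antisymm (le_trans (Measure.restrict_le_self _) (by simp)) zero_le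
      have hne : ∀ᵐ t ∂(volume.restrict (uIoc (0:ℝ) x₀)), t ≠ x₀ := by
        rw [ae_iff]; simpa using h0
      filter_upwards [hne, ae_restrict_mem measurableSet_uIoc] with t ht ht2
      rw [uIoc_of_le hx0.le] at ht2
      have : t < x₀ := lt_of_le_of_ne ht2.2 ht
      simp only [hg, haP1 t this]
    have hg2 : IntervalIntegrable g volume x₀ Real.pi := by
      have hInt2 : IntervalIntegrable (fun t => k₂^2 * u t) volume x₀ Real.pi :=
        (continuousOn_const.mul (hucont.mono (by
          rw [uIcc_of_le hxpi.le]; exact Icc_subset_Icc hx0.le le_rfl))).intervalIntegrable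
      apply hInt2.congr_ae
      filter_upwards [ae_restrict_mem measurableSet_uIoc] with t ht2
      rw [uIoc_of_le hxpi.le] at ht2
      simp only [hg, haP2 t ht2.1.le]
    have heq1 : ∀ x ∈ Icc (0:ℝ) x₀, (∫ t in (0:ℝ)..x, g t) = k₁^2 * ∫ t in (0:ℝ)..x, u t := by
      intro x hx
      rw [← intervalIntegral.integral_const_mul]
      apply intervalIntegral.integral_congr_ae
      have hne : ∀ᵐ t : ℝ, t ≠ x₀ := by
        rw [ae_iff]; simpa using (by simp : volume ({x₀} : Set ℝ) = 0)
      filter_upwards [hne] with t ht htm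
      rw [uIoc_of_le hx.1] at htm
      have : t < x₀ := lt_of_le_of_ne (htm.2.trans hx.2) ht
      simp only [hg, haP1 t this]
    have heq2 : ∀ x ∈ Icc x₀ Real.pi, (∫ t in x₀..x, g t) = k₂^2 * ∫ t in x₀..x, u t := by
      intro x hx
      rw [← intervalIntegral.integral_const_mul]
      apply intervalIntegral.integral_congr
      intro t ht
      rw [uIcc_of_le hx.1] at ht
      simp only [hg, haP2 t ht.1]
    -- representation on [0, x₀]
    have hrep1 := rep hk₁ hx0 (u := u) (v := v)
      (fun x hx => (hu x ⟨hx.1, hx.2.trans hxpi.le⟩).mono (Icc_subset_Icc le_rfl hxpi.le))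
      (fun x hx => by
        rw [hv x ⟨hx.1, hx.2.trans hxpi.le⟩, ← heq1 x hx])
    -- representation on [x₀, π]
    have hrep2 := rep hk₂ hxpi (u := u) (v := v)
      (fun x hx => (hu x ⟨hx0.le.trans hx.1, hx.2⟩).mono (Icc_subset_Icc hx0.le le_rfl))
      (fun x hx => by
        have e1 := hv x ⟨hx0.le.trans hx.1, hx.2⟩
        have e2 := hv x₀ ⟨hx0.le, hxpi.le⟩
        have e3 : (∫ t in (0:ℝ)..x, g t) = (∫ t in (0:ℝ)..x₀, g t) + ∫ t in x₀..x, g t :=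
          (intervalIntegral.integral_add_adjacent_intervals hg1
            (hg2.mono_set (by
              rw [uIcc_of_le hx.1, uIcc_of_le hxpi.le]
              exact Icc_subset_Icc le_rfl hx.2))).symm
        rw [← heq2 x hx]
        rw [e3] at e1
        linarith)
    have hrx₀ := hrep1 x₀ ⟨hx0.le, le_rfl⟩
    rw [sub_zero, hk₁x] at hrx₀
    have hrπ := hrep2 Real.pi ⟨hxpi.le, le_rfl⟩
    rw [hk₂y] at hrπ
    set A := u 0 with hA
    set B := v 0 with hB
    set P := u x₀ with hP
    set Q := v x₀ with hQ
    have e3 : P = A * cα + (B/k₁) * sα := by rw [hrx₀.1]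
    have e4 : Q = k₁ * (-A*sα + (B/k₁)*cα) := by rw [hrx₀.2]
    have e5 : u Real.pi = P * cα + (Q/k₂) * sα := by rw [hrπ.1]
    have e6 : v Real.pi = k₂ * (-P*sα + (Q/k₂)*cα) := by rw [hrπ.2]
    by_contra hcon
    push_neg at hcon
    obtain ⟨hne1, hne2⟩ := hcon
    -- determinant nonzero
    have hDne : cα^2*(k₁+k₂)^2 - (k₁-k₂)^2 ≠ 0 := by
      intro hD0
      have hsq : (cα*(k₁+k₂))^2 = (k₁-k₂)^2 := by linear_combination hD0
      rcases sq_eq_sq_iff_eq_or_eq_neg.mp hsq with h | h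
      · -- cα(k₁+k₂) = k₁ - k₂ : x₀ = π/2 (1-cα)
        apply hne1
        have h1 : cα*(k₁+k₂)*(x₀*(Real.pi - x₀)) = (k₁-k₂)*(x₀*(Real.pi - x₀)) := by
          rw [h]
        have h2 : cα*(α*Real.pi) = α*(Real.pi - 2*x₀) := by
          linear_combination h1 - (cα*(Real.pi - x₀) - (Real.pi - x₀))*hk₁x
            - (cα*x₀ + x₀)*hk₂y
        have h3 : cα*Real.pi = Real.pi - 2*x₀ :=
          mul_left_cancel₀ hα0.ne' (by linear_combination h2)
        linarith
      · apply hne2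
        have h1 : cα*(k₁+k₂)*(x₀*(Real.pi - x₀)) = (-(k₁-k₂))*(x₀*(Real.pi - x₀)) := by
          rw [h]
        have h2 : cα*(α*Real.pi) = -(α*(Real.pi - 2*x₀)) := by
          linear_combination h1 - (cα*(Real.pi - x₀) + (Real.pi - x₀))*hk₁x
            - (cα*x₀ - x₀)*hk₂y
        have h3 : cα*Real.pi = -(Real.pi - 2*x₀) :=
          mul_left_cancel₀ hα0.ne' (by linear_combination h2)
        linarith
    have hDrawne : (k₂*(1+cα^2) - k₁*sα^2) * (k₁*(1+cα^2) - k₂*sα^2)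
        + (sα*cα*(k₁+k₂))^2 ≠ 0 := by
      intro h
      apply hDne
      linear_combination h - (k₁*k₂*(sα^2+1-cα^2) - (k₁^2+k₂^2)*(1+cα^2)
        + cα^2*(k₁+k₂)^2) * hsc
    -- linear system
    have g1 : k₁*(k₂*(1+cα^2) - k₁*sα^2)*A + sα*cα*(k₁+k₂)*B = 0 := by
      have h := hbc1
      rw [e5, e3, e4] at h
      field_simp at h
      linear_combination h
    have g2 : k₂*((-(sα*cα*k₁*(k₁+k₂)))*A + (k₁*(1+cα^2) - k₂*sα^2)*B) = 0 := by
      have h := hbc2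
      rw [e6, e3, e4] at h
      field_simp at h
      linear_combination k₂ * h
    set Draw := (k₂*(1+cα^2) - k₁*sα^2) * (k₁*(1+cα^2) - k₂*sα^2) + (sα*cα*(k₁+k₂))^2
      with hDrawdef
    have hA0 : (k₁*k₂*Draw) * A = 0 := by
      rw [hDrawdef]
      linear_combination (k₂*(k₁*(1+cα^2) - k₂*sα^2))*g1 - (sα*cα*(k₁+k₂))*g2
    have hB0 : (k₁*k₂*Draw) * B = 0 := by
      rw [hDrawdef]
      linear_combination (k₂*(1+cα^2) - k₁*sα^2)*k₁*g2 + sα*cα*(k₁+k₂)*k₁*k₂*g1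
    have hkD : k₁*k₂*Draw ≠ 0 := mul_ne_zero (mul_ne_zero hk₁.ne' hk₂.ne') hDrawne
    have hA00 : A = 0 := by rcases mul_eq_zero.mp hA0 with h | h; exact absurd h hkD; exact h
    have hB00 : B = 0 := by rcases mul_eq_zero.mp hB0 with h | h; exact absurd h hkD; exact h
    have hP0 : P = 0 := by rw [e3, hA00, hB00]; ring
    have hQ0 : Q = 0 := by rw [e4, hA00, hB00]; ring
    apply hux₁
    rcases le_total x₁ x₀ with hle | hle
    · have := (hrep1 x₁ ⟨hx₁.1, hle⟩).1
      rw [this, hA00, hB00]; ring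
    · have := (hrep2 x₁ ⟨hle, hx₁.2⟩).1
      rw [this, hP0, hQ0]; ring
  · -- backward direction
    intro hcase
    -- the determinant relation
    have hD1 : cα*(k₁+k₂) = k₁-k₂ ∨ cα*(k₁+k₂) = -(k₁-k₂) := by
      rcases hcase with h | h
      · left
        have hπc : Real.pi - 2*x₀ = Real.pi*cα := by rw [h]; ring
        have h1 : cα*(k₁+k₂)*(x₀*(Real.pi - x₀)) = (k₁-k₂)*(x₀*(Real.pi - x₀)) := by
          linear_combination (cα*(Real.pi-x₀) - (Real.pi - x₀))*hk₁x + (cα*x₀ + x₀)*hk₂y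
            - α*hπc
        exact mul_right_cancel₀ (by positivity) h1
      · right
        have hπc : Real.pi - 2*x₀ = -(Real.pi*cα) := by rw [h]; ring
        have h1 : cα*(k₁+k₂)*(x₀*(Real.pi - x₀)) = (-(k₁-k₂))*(x₀*(Real.pi - x₀)) := by
          linear_combination (cα*(Real.pi-x₀) + (Real.pi - x₀))*hk₁x + (cα*x₀ - x₀)*hk₂y
            + α*hπc
        exact mul_right_cancel₀ (by positivity) h1
    have hD0 : cα^2*(k₁+k₂)^2 - (k₁-k₂)^2 = 0 := by
      rcases hD1 with h | h
      · linear_combination (cα*(k₁+k₂) + (k₁-k₂))*h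
      · linear_combination (cα*(k₁+k₂) - (k₁-k₂))*h
    have hDraw : (k₂*(1+cα^2) - k₁*sα^2) * (k₁*(1+cα^2) - k₂*sα^2)
        + (sα*cα*(k₁+k₂))^2 = 0 := by
      linear_combination hD0 + (k₁*k₂*(sα^2+1-cα^2) - (k₁^2+k₂^2)*(1+cα^2)
        + cα^2*(k₁+k₂)^2) * hsc
    -- construct the solution
    set A := sα*cα*(k₁+k₂) with hAdef
    set B := -(k₁*(k₂*(1+cα^2) - k₁*sα^2)) with hBdef
    set P := A * cα + (B/k₁) * sα with hPdef
    set Q := k₁ * (-A*sα + (B/k₁)*cα) with hQdef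
    set u₁ : ℝ → ℝ := fun x => A * Real.cos (k₁*(x-0)) + (B/k₁) * Real.sin (k₁*(x-0)) with hu₁
    set v₁ : ℝ → ℝ := fun x => k₁ * (-A * Real.sin (k₁*(x-0)) + (B/k₁) * Real.cos (k₁*(x-0)))
      with hv₁
    set u₂ : ℝ → ℝ := fun x => P * Real.cos (k₂*(x-x₀)) + (Q/k₂) * Real.sin (k₂*(x-x₀)) with hu₂
    set v₂ : ℝ → ℝ := fun x => k₂ * (-P * Real.sin (k₂*(x-x₀)) + (Q/k₂) * Real.cos (k₂*(x-x₀)))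
      with hv₂
    set u : ℝ → ℝ := fun x => if x ≤ x₀ then u₁ x else u₂ x with hudef
    set v : ℝ → ℝ := fun x => if x ≤ x₀ then v₁ x else v₂ x with hvdef
    have hu₁x₀ : u₁ x₀ = P := by rw [hu₁]; simp only [sub_zero, hk₁x]; rfl
    have hv₁x₀ : v₁ x₀ = Q := by rw [hv₁]; simp only [sub_zero, hk₁x]; rfl
    have hu₂x₀ : u₂ x₀ = P := by rw [hu₂]; simp
    have hv₂x₀ : v₂ x₀ = Q := by rw [hv₂]; simp; field_simp
    have hEq1 : EqOn u u₁ (Icc 0 x₀) := fun t ht => if_pos ht.2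
    have hEq2 : EqOn u u₂ (Icc x₀ Real.pi) := by
      intro t ht
      simp only [hudef]
      by_cases h : t ≤ x₀
      · have ht0 : t = x₀ := le_antisymm h ht.1
        rw [if_pos h, ht0, hu₁x₀, hu₂x₀]
      · rw [if_neg h]
    have hd1 : ∀ x, HasDerivAt u₁ (v₁ x) x := fun x => trig_hasDerivAt A (B/k₁) k₁ 0 x
    have hd2 : ∀ x, HasDerivAt u₂ (v₂ x) x := fun x => trig_hasDerivAt P (Q/k₂) k₂ x₀ x
    have hvx : ∀ x, x ≤ x₀ → v x = v₁ x := fun x h => if_pos h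
    have hvx' : ∀ x, x₀ ≤ x → v x = v₂ x := by
      intro x h
      simp only [hvdef]
      by_cases h2 : x ≤ x₀
      · have hx0' : x = x₀ := le_antisymm h2 h
        rw [if_pos h2, hx0', hv₁x₀, hv₂x₀]
      · rw [if_neg h2]
    refine ⟨u, v, ⟨?_, ?_⟩, ?_, ?_, ⟨0, ⟨le_rfl, hπ.le⟩, ?_⟩⟩
    · -- derivative
      intro x hx
      rw [← Icc_union_Icc_eq_Icc hx0.le hxpi.le]
      apply HasDerivWithinAt.union
      · by_cases hxx : x ≤ x₀
        · rw [hvx x hxx]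
          exact ((hd1 x).hasDerivWithinAt).congr hEq1 (if_pos hxx)
        · exact HasFDerivWithinAt.of_notMem_closure (by
            rw [closure_Icc]
            intro hmem
            exact hxx hmem.2)
      · by_cases hxx : x₀ ≤ x
        · rw [hvx' x hxx]
          exact ((hd2 x).hasDerivWithinAt).congr hEq2 (hEq2 ⟨hxx, hx.2⟩)
        · exact HasFDerivWithinAt.of_notMem_closure (by
            rw [closure_Icc]
            intro hmem
            exact hxx hmem.1)
    · -- integral equation
      intro x hx
      have hv0 : v 0 = B := by
        rw [hvx 0 hx0.le, hv₁]
        simp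
        field_simp
      rw [hv0]
      by_cases hxx : x ≤ x₀
      · have hcongr : (∫ t in (0:ℝ)..x, aPiece α x₀ t * u t)
            = ∫ t in (0:ℝ)..x, k₁^2 * (A * Real.cos (k₁*(t-0)) + (B/k₁) * Real.sin (k₁*(t-0))) := by
          apply intervalIntegral.integral_congr_ae
          have hne : ∀ᵐ t : ℝ, t ≠ x₀ := by
            rw [ae_iff]; simpa using (by simp : volume ({x₀} : Set ℝ) = 0)
          filter_upwards [hne] with t ht htm
          rw [uIoc_of_le hx.1] at htm
          have htlt : t < x₀ := lt_of_le_of_ne (htm.2.trans hxx) ht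
          rw [haP1 t htlt, hudef]
          simp only [if_pos htlt.le, hu₁]
        rw [hcongr, trig_int A (B/k₁) k₁ 0 x, hvx x hxx, hv₁]
        field_simp
        ring
      · push_neg at hxx
        have hint1 : IntervalIntegrable (fun t => aPiece α x₀ t * u t) volume 0 x₀ := by
          have hInt1 : IntervalIntegrable (fun t => k₁^2 * u₁ t) volume 0 x₀ := by
            apply Continuous.intervalIntegrable
            rw [hu₁]; fun_prop
          apply hInt1.congr_ae
          have h0 : (volume.restrict (uIoc (0:ℝ) x₀)) {x₀} = 0 :=
            le_antisymm (le_trans (Measure.restrict_le_self _) (by simp)) zero_le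
          have hne : ∀ᵐ t ∂(volume.restrict (uIoc (0:ℝ) x₀)), t ≠ x₀ := by
            rw [ae_iff]; simpa using h0
          filter_upwards [hne, ae_restrict_mem measurableSet_uIoc] with t ht ht2
          rw [uIoc_of_le hx0.le] at ht2
          have htlt : t < x₀ := lt_of_le_of_ne ht2.2 ht
          rw [haP1 t htlt, hudef]
          simp only [if_pos htlt.le]
        have hint2 : IntervalIntegrable (fun t => aPiece α x₀ t * u t) volume x₀ x := by
          have hInt2 : IntervalIntegrable (fun t => k₂^2 * u₂ t) volume x₀ x := by
            apply Continuous.intervalIntegrable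
            rw [hu₂]; fun_prop
          apply hInt2.congr_ae
          filter_upwards [ae_restrict_mem measurableSet_uIoc] with t ht2
          rw [uIoc_of_le hxx.le] at ht2
          rw [haP2 t ht2.1.le, hudef]
          simp only [if_neg (not_le.mpr ht2.1)]
        have hsplit : (∫ t in (0:ℝ)..x, aPiece α x₀ t * u t)
            = (∫ t in (0:ℝ)..x₀, aPiece α x₀ t * u t) + ∫ t in x₀..x, aPiece α x₀ t * u t :=
          (intervalIntegral.integral_add_adjacent_intervals hint1 hint2).symm
        have hI1 : (∫ t in (0:ℝ)..x₀, aPiece α x₀ t * u t) = B - Q := by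
          have hcongr : (∫ t in (0:ℝ)..x₀, aPiece α x₀ t * u t)
              = ∫ t in (0:ℝ)..x₀, k₁^2 * (A * Real.cos (k₁*(t-0)) + (B/k₁) * Real.sin (k₁*(t-0))) := by
            apply intervalIntegral.integral_congr_ae
            have hne : ∀ᵐ t : ℝ, t ≠ x₀ := by
              rw [ae_iff]; simpa using (by simp : volume ({x₀} : Set ℝ) = 0)
            filter_upwards [hne] with t ht htm
            rw [uIoc_of_le hx0.le] at htm
            have htlt : t < x₀ := lt_of_le_of_ne htm.2 ht
            rw [haP1 t htlt, hudef]
            simp only [if_pos htlt.le, hu₁]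
          rw [hcongr, trig_int A (B/k₁) k₁ 0 x₀]
          have : k₁ * (-A * Real.sin (k₁ * (x₀ - 0)) + B / k₁ * Real.cos (k₁ * (x₀ - 0))) = Q := by
            exact hv₁x₀
          rw [this]
          field_simp
        have hI2 : (∫ t in x₀..x, aPiece α x₀ t * u t) = Q - v₂ x := by
          have hcongr : (∫ t in x₀..x, aPiece α x₀ t * u t)
              = ∫ t in x₀..x, k₂^2 * (P * Real.cos (k₂*(t-x₀)) + (Q/k₂) * Real.sin (k₂*(t-x₀))) := by
            apply intervalIntegral.integral_congr
            intro t ht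
            rw [uIcc_of_le hxx.le] at ht
            show aPiece α x₀ t * u t = _
            rw [haP2 t ht.1]
            simp only [hudef]
            by_cases h : t ≤ x₀
            · have ht0 : t = x₀ := le_antisymm h ht.1
              rw [if_pos h, ht0, hu₁x₀]
              simp
            · rw [if_neg h, hu₂]
          rw [hcongr, trig_int P (Q/k₂) k₂ x₀ x]
          simp only [hv₂]
          field_simp
        rw [hsplit, hI1, hI2, hvx' x hxx.le]
        ring
    · -- u 0 + u π = 0
      have hu0 : u 0 = A := by
        rw [hudef]; simp only [if_pos hx0.le, hu₁]; simp
      have huπ : u Real.pi = P * cα + (Q/k₂) * sα := by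
        rw [hudef]; simp only [if_neg (not_le.mpr hxpi), hu₂, hk₂y]; rfl
      rw [hu0, huπ, hPdef, hQdef, hAdef, hBdef]
      field_simp
      ring
    · -- v 0 + v π = 0
      have hv0 : v 0 = B := by
        rw [hvx 0 hx0.le, hv₁]; simp; field_simp
      have hvπ : v Real.pi = k₂ * (-P * sα + (Q/k₂) * cα) := by
        rw [hvx' Real.pi hxpi.le]
        simp only [hv₂, hk₂y]; rfl
      have hfinal : B + k₂*(-P*sα + (Q/k₂)*cα)
          = -((k₂*(1+cα^2) - k₁*sα^2) * (k₁*(1+cα^2) - k₂*sα^2) + (sα*cα*(k₁+k₂))^2) := by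
        rw [hPdef, hQdef, hAdef, hBdef]
        field_simp
        ring
      rw [hv0, hvπ, hfinal, hDraw]
      simp
    · -- nontrivial
      have hu0 : u 0 = A := by
        rw [hudef]; simp only [if_pos hx0.le, hu₁]; simp
      rw [hu0, hAdef]
      positivity
end

section
/- Let α ∈ (0, π) and x₀ ∈ (0, π) be given, and define a_{α,x₀} : (0,π) → ℝ by a_{α,x₀}(x) = α²/x₀² for x ∈ (0,x₀) and a_{α,x₀}(x) = α²/(π−x₀)² for x ∈ (x₀,π). Then the periodic boundary value problem u''(x) + a_{α,x₀}(x)u(x) = 0 on (0,π), u(0) − u(π) = 0, u'(0) − u'(π) = 0, has only the trivial solution u ≡ 0. -/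
open MeasureTheory Set Real

section helpers

lemma keyODE (ω c d : ℝ) (hω : 0 < ω) (hcd : c < d) (u v : ℝ → ℝ)
    (hu : ∀ x ∈ Set.Icc c d, HasDerivWithinAt u (v x) (Set.Icc c d) x)
    (hv : ∀ x ∈ Set.Icc c d, HasDerivWithinAt v (-(ω^2) * u x) (Set.Icc c d) x) :
    ∀ x ∈ Set.Icc c d,
      u x = u c * Real.cos (ω*(x-c)) + (v c / ω) * Real.sin (ω*(x-c)) ∧
      v x = -(u c * ω) * Real.sin (ω*(x-c)) + v c * Real.cos (ω*(x-c)) := by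
  set U : ℝ → ℝ := fun x => u c * Real.cos (ω*(x-c)) + (v c / ω) * Real.sin (ω*(x-c)) with hU
  set V : ℝ → ℝ := fun x => -(u c * ω) * Real.sin (ω*(x-c)) + v c * Real.cos (ω*(x-c)) with hV
  have hωne : ω ≠ 0 := ne_of_gt hω
  have hUd : ∀ x : ℝ, HasDerivAt U (V x) x := by
    intro x
    have h1 : HasDerivAt (fun x => ω*(x-c)) ω x := by
      simpa using ((hasDerivAt_id x).sub_const c).const_mul ω
    have hcos : HasDerivAt (fun x => Real.cos (ω*(x-c))) (-Real.sin (ω*(x-c)) * ω) x :=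
      (Real.hasDerivAt_cos _).comp x h1
    have hsin : HasDerivAt (fun x => Real.sin (ω*(x-c))) (Real.cos (ω*(x-c)) * ω) x :=
      (Real.hasDerivAt_sin _).comp x h1
    have := (hcos.const_mul (u c)).add (hsin.const_mul (v c / ω))
    refine this.congr_deriv ?_
    simp only [hV]
    field_simp
  have hVd : ∀ x : ℝ, HasDerivAt V (-(ω^2) * U x) x := by
    intro x
    have h1 : HasDerivAt (fun x => ω*(x-c)) ω x := by
      simpa using ((hasDerivAt_id x).sub_const c).const_mul ω
    have hcos : HasDerivAt (fun x => Real.cos (ω*(x-c))) (-Real.sin (ω*(x-c)) * ω) x :=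
      (Real.hasDerivAt_cos _).comp x h1
    have hsin : HasDerivAt (fun x => Real.sin (ω*(x-c))) (Real.cos (ω*(x-c)) * ω) x :=
      (Real.hasDerivAt_sin _).comp x h1
    have := (hsin.const_mul (-(u c * ω))).add (hcos.const_mul (v c))
    refine this.congr_deriv ?_
    simp only [hU]
    field_simp
    ring
  set E : ℝ → ℝ := fun x => (v x - V x)^2 + ω^2 * (u x - U x)^2 with hE
  have hEd : ∀ x ∈ Set.Icc c d, HasDerivWithinAt E 0 (Set.Icc c d) x := by
    intro x hx
    have hq : HasDerivWithinAt (fun x => v x - V x) (-(ω^2) * u x - (-(ω^2) * U x))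
        (Set.Icc c d) x := (hv x hx).sub (hVd x).hasDerivWithinAt
    have hp : HasDerivWithinAt (fun x => u x - U x) (v x - V x) (Set.Icc c d) x :=
      (hu x hx).sub (hUd x).hasDerivWithinAt
    have := ((hq.pow 2).add (((hp.pow 2)).const_mul (ω^2)))
    refine this.congr_deriv ?_
    simp only [Nat.cast_ofNat, pow_one]
    ring
  have hEc : ∀ x ∈ Set.Icc c d, E x = E c := by
    apply constant_of_derivWithin_zero
    · intro x hx
      exact (hEd x hx).differentiableWithinAt
    · intro x hx
      exact (hEd x (Set.mem_Icc_of_Ico hx)).derivWithin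
        (uniqueDiffOn_Icc hcd x (Set.mem_Icc_of_Ico hx))
  have hE0 : E c = 0 := by
    simp [hE, hU, hV, hωne]
  intro y hy
  have hEx : (v y - V y)^2 + ω^2 * (u y - U y)^2 = 0 := by
    have := hEc y hy; rw [hE0] at this; exact this
  have hω2 : 0 < ω^2 := pow_pos hω 2
  have hA : (v y - V y)^2 = 0 :=
    le_antisymm (by nlinarith [mul_nonneg hω2.le (sq_nonneg (u y - U y))]) (sq_nonneg _)
  have hB : (u y - U y)^2 = 0 := by
    have h1 : ω^2 * (u y - U y)^2 = 0 := by nlinarith [sq_nonneg (v y - V y)]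
    exact (mul_eq_zero.mp h1).resolve_left (ne_of_gt hω2)
  have hA' : v y - V y = 0 := pow_eq_zero_iff (n := 2) (by norm_num) |>.mp hA
  have hB' : u y - U y = 0 := pow_eq_zero_iff (n := 2) (by norm_num) |>.mp hB
  exact ⟨by have := sub_eq_zero.mp hB'; simpa [hU] using this,
         by have := sub_eq_zero.mp hA'; simpa [hV] using this⟩

lemma derivOfIntegral (ω c d : ℝ) (u v : ℝ → ℝ)
    (hu : ∀ x ∈ Set.Icc c d, HasDerivWithinAt u (v x) (Set.Icc c d) x)
    (hv : ∀ x ∈ Set.Icc c d, v x = v c - ω^2 * ∫ t in c..x, u t) :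
    ∀ x ∈ Set.Icc c d, HasDerivWithinAt v (-(ω^2) * u x) (Set.Icc c d) x := by
  have ucont : ContinuousOn u (Set.Icc c d) := fun x hx => (hu x hx).continuousWithinAt
  intro x hx
  haveI : Fact (x ∈ Set.Icc c d) := ⟨hx⟩
  have hint : IntervalIntegrable u volume c x := by
    apply ContinuousOn.intervalIntegrable
    apply ucont.mono
    rw [Set.uIcc_of_le hx.1]
    exact Set.Icc_subset_Icc le_rfl hx.2
  have hmeas : StronglyMeasurableAtFilter u (nhdsWithin x (Set.Icc c d)) volume :=
    ucont.stronglyMeasurableAtFilter_nhdsWithin measurableSet_Icc x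
  have hF : HasDerivWithinAt (fun y => ∫ t in c..y, u t) (u x) (Set.Icc c d) x :=
    intervalIntegral.integral_hasDerivWithinAt_right hint hmeas (ucont x hx)
  have h2 : HasDerivWithinAt (fun y => v c - ω^2 * ∫ t in c..y, u t)
      (-(ω^2) * u x) (Set.Icc c d) x := by
    have := (hF.const_mul (ω^2)).const_sub (v c)
    refine this.congr_deriv ?_
    ring
  exact h2.congr (fun y hy => (hv y hy)) (hv x hx)

lemma algStep (u0 v0 A B w1 w2 s co : ℝ) (hw1 : 0 < w1) (hw2 : 0 < w2) (hs : 0 < s)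
    (pyth : s^2 + co^2 = 1)
    (h1 : A = u0*co + (v0/w1)*s) (h2 : B = -(u0*w1)*s + v0*co)
    (h3 : u0 = A*co + (B/w2)*s) (h4 : v0 = -(A*w2)*s + B*co) :
    u0 = 0 ∧ v0 = 0 := by
  have hw1' := hw1.ne'
  have hw2' := hw2.ne'
  rw [h1, h2] at h3 h4
  field_simp at h3 h4
  have hk : 0 < s * (w1 + w2) := by positivity
  have X : u0*s*w1 - v0*co = 0 := by
    have : (u0*s*w1 - v0*co) * (s*(w1+w2)) = 0 := by linear_combination h3 + u0*w1*w2*pyth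
    exact (mul_eq_zero.mp this).resolve_right hk.ne'
  have Y : v0*s + u0*co*w1 = 0 := by
    have : (v0*s + u0*co*w1) * (s*(w1+w2)) = 0 := by linear_combination h4 + v0*w1*pyth
    exact (mul_eq_zero.mp this).resolve_right hk.ne'
  have hu0 : u0 = 0 := by
    have h : u0 * w1 = 0 := by linear_combination s*X + co*Y - u0*w1*pyth
    exact (mul_eq_zero.mp h).resolve_right hw1'
  refine ⟨hu0, ?_⟩
  have h : v0 * s = 0 := by linear_combination Y - co*w1*hu0
  exact (mul_eq_zero.mp h).resolve_right hs.ne'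

end helpers

theorem stmt16 (α x₀ : ℝ) (hα : α ∈ Set.Ioo 0 Real.pi)
    (hx₀ : x₀ ∈ Set.Ioo 0 Real.pi) :
    ∀ u v : ℝ → ℝ, IsSolOn (aPiece α x₀) u v 0 Real.pi →
      u 0 - u Real.pi = 0 → v 0 - v Real.pi = 0 →
      ∀ x ∈ Set.Icc 0 Real.pi, u x = 0 := by
  obtain ⟨hα0, hαπ⟩ := hα
  obtain ⟨hx0, hxπ⟩ := hx₀
  intro u v ⟨hu, hv⟩ hpu hpv
  set w1 : ℝ := α / x₀ with hw1def
  set w2 : ℝ := α / (Real.pi - x₀) with hw2def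
  have hπx : 0 < Real.pi - x₀ := by linarith
  have hw1 : 0 < w1 := div_pos hα0 hx0
  have hw2 : 0 < w2 := div_pos hα0 hπx
  have hsub1 : Set.Icc (0:ℝ) x₀ ⊆ Set.Icc 0 Real.pi := Set.Icc_subset_Icc le_rfl hxπ.le
  have hsub2 : Set.Icc x₀ Real.pi ⊆ Set.Icc 0 Real.pi := Set.Icc_subset_Icc hx0.le le_rfl
  have ucont : ContinuousOn u (Set.Icc 0 Real.pi) := fun x hx => (hu x hx).continuousWithinAt
  have hane : ∀ᵐ t : ℝ, t ≠ x₀ := by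
    rw [MeasureTheory.ae_iff]
    simpa using (by simp : volume ({x₀} : Set ℝ) = 0)
  -- a = w1^2 a.e. on left pieces
  have haeq1 : ∀ x ∈ Set.Icc (0:ℝ) x₀,
      (∫ t in (0:ℝ)..x, aPiece α x₀ t * u t) = w1^2 * ∫ t in (0:ℝ)..x, u t := by
    intro x hx
    rw [← intervalIntegral.integral_const_mul]
    apply intervalIntegral.integral_congr_ae
    filter_upwards [hane] with t ht hmem
    rw [Set.uIoc_of_le hx.1] at hmem
    have htlt : t < x₀ := lt_of_le_of_ne (hmem.2.trans hx.2) ht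
    simp only [aPiece, htlt, if_true, hw1def, div_pow]
  -- derivative form on [0, x₀]
  have hu1 : ∀ x ∈ Set.Icc (0:ℝ) x₀, HasDerivWithinAt u (v x) (Set.Icc 0 x₀) x :=
    fun x hx => (hu x (hsub1 hx)).mono hsub1
  have hv1 : ∀ x ∈ Set.Icc (0:ℝ) x₀, v x = v 0 - w1^2 * ∫ t in (0:ℝ)..x, u t := by
    intro x hx
    rw [hv x (hsub1 hx), haeq1 x hx]
  have sol1 := keyODE w1 0 x₀ hw1 hx0 u v hu1 (derivOfIntegral w1 0 x₀ u v hu1 hv1)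
  -- integrability pieces
  have hint1 : IntervalIntegrable (fun t => aPiece α x₀ t * u t) volume 0 x₀ := by
    have hc : IntervalIntegrable (fun t => w1^2 * u t) volume 0 x₀ := by
      apply ContinuousOn.intervalIntegrable
      exact (continuous_const.continuousOn.mul (ucont.mono (by
        rw [Set.uIcc_of_le hx0.le]; exact hsub1)))
    apply hc.congr_ae
    filter_upwards [MeasureTheory.ae_restrict_mem measurableSet_uIoc,
      MeasureTheory.ae_mono MeasureTheory.Measure.restrict_le_self hane] with t hmem ht
    rw [Set.uIoc_of_le hx0.le] at hmem
    have htlt : t < x₀ := lt_of_le_of_ne hmem.2 ht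
    simp only [aPiece, htlt, if_true, hw1def, div_pow]
  have hint2 : ∀ x ∈ Set.Icc x₀ Real.pi,
      IntervalIntegrable (fun t => aPiece α x₀ t * u t) volume x₀ x := by
    intro x hx
    have hc : IntervalIntegrable (fun t => w2^2 * u t) volume x₀ x := by
      apply ContinuousOn.intervalIntegrable
      refine continuous_const.continuousOn.mul (ucont.mono ?_)
      rw [Set.uIcc_of_le hx.1]
      exact (Set.Icc_subset_Icc le_rfl hx.2).trans hsub2
    apply hc.congr_ae
    filter_upwards [MeasureTheory.ae_restrict_mem measurableSet_uIoc] with t hmem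
    rw [Set.uIoc_of_le hx.1] at hmem
    have : ¬ t < x₀ := not_lt.mpr hmem.1.le
    simp only [aPiece, this, if_false, hw2def, div_pow]
  -- derivative form on [x₀, π]
  have hu2 : ∀ x ∈ Set.Icc x₀ Real.pi, HasDerivWithinAt u (v x) (Set.Icc x₀ Real.pi) x :=
    fun x hx => (hu x (hsub2 hx)).mono hsub2
  have hv2 : ∀ x ∈ Set.Icc x₀ Real.pi, v x = v x₀ - w2^2 * ∫ t in x₀..x, u t := by
    intro x hx
    have hx' : x ∈ Set.Icc (0:ℝ) Real.pi := hsub2 hx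
    have hx₀' : x₀ ∈ Set.Icc (0:ℝ) Real.pi := ⟨hx0.le, hxπ.le⟩
    have hsplit : (∫ t in (0:ℝ)..x₀, aPiece α x₀ t * u t)
        + ∫ t in x₀..x, aPiece α x₀ t * u t = ∫ t in (0:ℝ)..x, aPiece α x₀ t * u t :=
      intervalIntegral.integral_add_adjacent_intervals hint1 (hint2 x hx)
    have h1 := hv x hx'
    have h2 := hv x₀ hx₀'
    have heq2 : (∫ t in x₀..x, aPiece α x₀ t * u t) = w2^2 * ∫ t in x₀..x, u t := by
      rw [← intervalIntegral.integral_const_mul]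
      apply intervalIntegral.integral_congr_ae
      filter_upwards with t hmem
      rw [Set.uIoc_of_le hx.1] at hmem
      have : ¬ t < x₀ := not_lt.mpr hmem.1.le
      simp only [aPiece, this, if_false, hw2def, div_pow]
    rw [h1, ← hsplit, heq2, h2]
    ring
  have sol2 := keyODE w2 x₀ Real.pi hw2 hxπ u v hu2 (derivOfIntegral w2 x₀ Real.pi u v hu2 hv2)
  -- evaluate
  have hx₀ne : x₀ ≠ 0 := hx0.ne'
  have hα1 : w1 * (x₀ - 0) = α := by
    rw [hw1def, sub_zero]
    field_simp
  have hα2 : w2 * (Real.pi - x₀) = α := by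
    rw [hw2def]
    field_simp
  obtain ⟨hux₀, hvx₀⟩ := sol1 x₀ ⟨hx0.le, le_rfl⟩
  obtain ⟨huπ, hvπ⟩ := sol2 Real.pi ⟨hxπ.le, le_rfl⟩
  rw [hα1] at hux₀ hvx₀
  rw [hα2] at huπ hvπ
  have hs : 0 < Real.sin α := Real.sin_pos_of_pos_of_lt_pi hα0 hαπ
  have pyth : Real.sin α ^ 2 + Real.cos α ^ 2 = 1 := Real.sin_sq_add_cos_sq α
  have huπ' : u 0 = u x₀ * Real.cos α + (v x₀ / w2) * Real.sin α := by
    rw [sub_eq_zero] at hpu; rw [hpu, huπ]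
  have hvπ' : v 0 = -(u x₀ * w2) * Real.sin α + v x₀ * Real.cos α := by
    rw [sub_eq_zero] at hpv; rw [hpv, hvπ]
  have hux₀' : u x₀ = u 0 * Real.cos α + (v 0 / w1) * Real.sin α := by
    rw [hux₀]
  have hvx₀' : v x₀ = -(u 0 * w1) * Real.sin α + v 0 * Real.cos α := by
    rw [hvx₀]
  obtain ⟨hu0, hv0⟩ := algStep (u 0) (v 0) (u x₀) (v x₀) w1 w2 (Real.sin α) (Real.cos α)
    hw1 hw2 hs pyth hux₀' hvx₀' huπ' hvπ'
  -- conclude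
  intro x hx
  rcases le_total x x₀ with hle | hge
  · have := (sol1 x ⟨hx.1, hle⟩).1
    rw [this, hu0, hv0]
    simp
  · have := (sol2 x ⟨hge, hx.2⟩).1
    have hux₀0 : u x₀ = 0 := by rw [hux₀', hu0, hv0]; simp
    have hvx₀0 : v x₀ = 0 := by rw [hvx₀', hu0, hv0]; simp
    rw [this, hux₀0, hvx₀0]
    simp
end
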